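/- Let λ ≥ 2, r ∈ (0,1/6) and C > 1. Let M be a compact metric space which is (λ,r,C)-homogeneous, and let (M_k) be any sequence of (λ,r)-finite hyperbolic approximations of M. Then for every k > log_{1/r}(diam M), d_1(M_k) ≤ 1 + 2C. -/

import Mathlib

open Finset

noncomputable section
open scoped Classical

namespace TCS

/-- The indicator function of a point. -/
def indic {V : Type*} [DecidableEq V] (x : V) : V → ℝ := fun z => if z = x then 1 else 0

/-- The molecule `δ_x - δ_y`. -/
def mol {V : Type*} [DecidableEq V] (x y : V) : V → ℝ := fun z => indic x z - indic y z

/-- `d` is a metric on `V`. -/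
def IsMetric {V : Type*} (d : V → V → ℝ) : Prop :=
  (∀ x y, d x y = d y x) ∧ (∀ x y, d x y = 0 ↔ x = y) ∧ ∀ x y z, d x z ≤ d x y + d y z

/-- The transportation cost norm of `μ` (an element of the free space over `(V, d)`,
i.e. a function with total sum zero), defined by duality with `Lip_0`. -/
def tcNorm {V : Type*} [Fintype V] (d : V → V → ℝ) (x0 : V) (μ : V → ℝ) : ℝ :=
  sSup {c : ℝ | ∃ f : V → ℝ, f x0 = 0 ∧ (∀ x y, |f x - f y| ≤ d x y) ∧ c = ∑ x, μ x * f x}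

/-- `(b, bstar)` is a basis of the free space over `Fin (N+1)` (with basepoint `0`),
indexed by `n ≠ 0`, together with its coordinate functionals. -/
def IsFreeBasis (N : ℕ) (b : Fin (N+1) → Fin (N+1) → ℝ)
    (bstar : Fin (N+1) → (Fin (N+1) → ℝ) → ℝ) : Prop :=
  (∀ n : Fin (N+1), n ≠ 0 → ∑ x, b n x = 0) ∧
  (∀ μ : Fin (N+1) → ℝ, (∑ x, μ x = 0) → ∀ z,
      μ z = ∑ n ∈ univ.filter (· ≠ (0 : Fin (N+1))), bstar n μ * b n z) ∧
  (∀ n m : Fin (N+1), n ≠ 0 → m ≠ 0 → bstar n (b m) = if n = m then 1 else 0) ∧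
  (∀ n (c : ℝ) (μ ν : Fin (N+1) → ℝ), bstar n (c • μ + ν) = c * bstar n μ + bstar n ν)

/-- Every canonical projection of the (ordered) basis `(b, bstar)` is a stochastic
retraction. -/
def IsStochProj (N : ℕ) (b : Fin (N+1) → Fin (N+1) → ℝ)
    (bstar : Fin (N+1) → (Fin (N+1) → ℝ) → ℝ) : Prop :=
  ∀ n : Fin (N+1),
    ∃ S : Finset (Fin (N+1)), (0 : Fin (N+1)) ∈ S ∧
      ∃ R : Fin (N+1) → Fin (N+1) → ℝ,
        (∀ x, (∀ z, 0 ≤ R x z) ∧ (∀ z, z ∉ S → R x z = 0) ∧ ∑ z, R x z = 1) ∧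
        (∀ x ∈ S, R x = indic x) ∧
        (∀ μ : Fin (N+1) → ℝ, (∑ x, μ x = 0) → ∀ z,
          (∑ i ∈ univ.filter (fun i => i ≠ (0 : Fin (N+1)) ∧ i ≤ n), bstar i μ * b i z)
            = ∑ x, μ x * R x z)

/-- The `ℓ₁`-distortion of the basis `(b, bstar)`. -/
def d1Basis {N : ℕ} (d : Fin (N+1) → Fin (N+1) → ℝ) (b : Fin (N+1) → Fin (N+1) → ℝ)
    (bstar : Fin (N+1) → (Fin (N+1) → ℝ) → ℝ) : ℝ :=
  sSup {c : ℝ | ∃ μ : Fin (N+1) → ℝ, (∑ x, μ x = 0) ∧ tcNorm d 0 μ = 1 ∧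
    c = ∑ n ∈ univ.filter (· ≠ (0 : Fin (N+1))), |bstar n μ| * tcNorm d 0 (b n)}

/-- The `ℓ₁ᴺ`-distortion of the metric space `(Fin (N+1), d)`. -/
def d1Space {N : ℕ} (d : Fin (N+1) → Fin (N+1) → ℝ) : ℝ :=
  sInf {c : ℝ | ∃ b bstar, IsFreeBasis N b bstar ∧ c = d1Basis d b bstar}

/-- The stochastic `ℓ₁ᴺ`-distortion of the metric space `(Fin (N+1), d)`. -/
def sd1Space {N : ℕ} (d : Fin (N+1) → Fin (N+1) → ℝ) : ℝ :=
  sInf {c : ℝ | ∃ b bstar, IsFreeBasis N b bstar ∧ IsStochProj N b bstar ∧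
      c = d1Basis d b bstar}

/-- The data `(λ_{n,i})` of a normalised stochastic basis. -/
def LamData (N : ℕ) (lam : Fin (N+1) → Fin (N+1) → ℝ) : Prop :=
  (∀ n i, 0 ≤ lam n i ∧ lam n i ≤ 1) ∧
  (∀ n i : Fin (N+1), ¬ i < n → lam n i = 0) ∧
  (∀ n : Fin (N+1), n ≠ 0 → ∑ i, lam n i = 1)

/-- The normalised stochastic basis with data `F`, `(λ_{n,i})`:
`b n = δ_{F n} - ∑_{i<n} λ_{n,i} δ_{F i}`. -/
def normBasisF {N : ℕ} (F : Equiv.Perm (Fin (N+1))) (lam : Fin (N+1) → Fin (N+1) → ℝ)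
    (n : Fin (N+1)) : Fin (N+1) → ℝ :=
  fun z => indic (F n) z - ∑ i, lam n i * indic (F i) z

/-- The normalised stochastic basis after identifying `M` with `{0, …, N}` via `F`. -/
def normBasis {N : ℕ} (lam : Fin (N+1) → Fin (N+1) → ℝ) : Fin (N+1) → Fin (N+1) → ℝ :=
  normBasisF (Equiv.refl _) lam

/-- `bstar` is the family of coordinate functionals of the normalised
stochastic basis with data `F`, `(λ_{n,i})`. -/
def IsCoordF {N : ℕ} (F : Equiv.Perm (Fin (N+1))) (lam : Fin (N+1) → Fin (N+1) → ℝ)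
    (bstar : Fin (N+1) → (Fin (N+1) → ℝ) → ℝ) : Prop :=
  ∀ μ : Fin (N+1) → ℝ, (∑ x, μ x = 0) → ∀ z,
    μ z = ∑ n ∈ univ.filter (· ≠ (0 : Fin (N+1))), bstar n μ * normBasisF F lam n z

/-- The auxiliary function `α(μ)` defined by downwards recursion:
`α(μ)(n) = μ n + ∑_{m > n} α(μ)(m) λ_{m,n}`. -/
def alpha {N : ℕ} (lam : Fin (N+1) → Fin (N+1) → ℝ) (μ : Fin (N+1) → ℝ)
    (n : Fin (N+1)) : ℝ :=
  μ n + ∑ m ∈ (Finset.univ.filter (fun m : Fin (N+1) => n < m)).attach,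
      alpha lam μ m.1 * lam m.1 n
termination_by (N + 1) - n.val
decreasing_by
  have hm := m.2
  simp only [Finset.mem_filter, Finset.mem_univ, true_and] at hm
  have h1 : n.val < m.1.val := hm
  have h2 := m.1.isLt
  omega

/-- Trees on `{0,…,N}` compatible with the order: given by a parent map with
`par n < n` for `n ≠ 0`. -/
def Tr (N : ℕ) : Type :=
  {par : Fin (N+1) → Fin (N+1) // par 0 = 0 ∧ ∀ n, n ≠ 0 → par n < n}

instance (N : ℕ) : Finite (Tr N) :=
  inferInstanceAs (Finite {par : Fin (N+1) → Fin (N+1) // par 0 = 0 ∧ ∀ n, n ≠ 0 → par n < n})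

noncomputable instance (N : ℕ) : Fintype (Tr N) := Fintype.ofFinite _

/-- `a` lies on the tree path from `x` to the root `0`. -/
def Anc {N : ℕ} (T : Tr N) (x a : Fin (N+1)) : Prop :=
  Relation.ReflTransGen (fun u v => v = T.1 u ∧ u ≠ 0) x a

/-- The meeting point `m_T(x,y)`: the minimal vertex of the tree path `[x,y]_T`,
equivalently the nearest common ancestor. -/
noncomputable def meet {N : ℕ} (T : Tr N) (x y : Fin (N+1)) : Fin (N+1) :=
  WithBot.unbotD 0 ((Finset.univ.filter (fun a => Anc T x a ∧ Anc T y a)).max)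

/-- `p` is a probability distribution on `Tr N`. -/
def IsProb {N : ℕ} (p : Tr N → ℝ) : Prop := (∀ T, 0 ≤ p T) ∧ ∑ T, p T = 1

/-- Probability of an event. -/
def probOf {N : ℕ} (p : Tr N → ℝ) (P : Tr N → Prop) : ℝ :=
  ∑ T ∈ Finset.univ.filter P, p T

/-- Expectation. -/
def expval {N : ℕ} (p : Tr N → ℝ) (f : Tr N → ℝ) : ℝ := ∑ T, p T * f T

/-- The geodesic distance `d_T(x,y)` of the weighted tree `T` (edge `{n, par n}`
carrying weight `d n (par n)`). -/
noncomputable def treeDist {N : ℕ} (d : Fin (N+1) → Fin (N+1) → ℝ) (T : Tr N)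
    (x y : Fin (N+1)) : ℝ :=
  ∑ s ∈ Finset.univ.filter (fun s =>
      (Anc T x s ∨ Anc T y s) ∧ Anc T s (meet T x y) ∧ s ≠ meet T x y),
    d s (T.1 s)

/-- `s` lies on the half-open segment `[z, m)_T`. -/
def onHalfSeg {N : ℕ} (T : Tr N) (z m s : Fin (N+1)) : Prop :=
  Anc T z s ∧ Anc T s m ∧ s ≠ m

/-- `p` is `(x,y)`-independent. -/
def XYIndep {N : ℕ} (p : Tr N → ℝ) (x y : Fin (N+1)) : Prop :=
  ∀ z : Fin (N+1), (z = x ∨ z = y) → ∀ s t : Fin (N+1), t < s →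
    probOf p (fun T => T.1 s = t ∧ onHalfSeg T z (meet T x y) s)
      = probOf p (fun T => T.1 s = t) * probOf p (fun T => onHalfSeg T z (meet T x y) s)

/-- `p0` and `p` are compatible: every vertex pair has the same probability of
being an edge of the random tree. -/
def Compat {N : ℕ} (p0 p : Tr N → ℝ) : Prop :=
  ∀ s t : Fin (N+1), t < s →
    probOf p0 (fun T => T.1 s = t) = probOf p (fun T => T.1 s = t)

/-- The product probability `π_{(b_n)}` determined by the data `(λ_{n,i})`. -/
def prodProb {N : ℕ} (lam : Fin (N+1) → Fin (N+1) → ℝ) (T : Tr N) : ℝ :=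
  ∏ n ∈ Finset.univ.filter (fun n : Fin (N+1) => n ≠ 0), lam n (T.1 n)

/-- The (strictly decreasing) chain with vertex set `S` is a subgraph of `T`:
consecutive elements of `S` are linked by the parent map. -/
def chainInTree {N : ℕ} (S : Finset (Fin (N+1))) (T : Tr N) : Prop :=
  ∀ a ∈ S, (∃ c ∈ S, c < a) → T.1 a ∈ S ∧ ∀ c ∈ S, c < a → c ≤ T.1 a

end TCS

namespace TCS

def IsNet {M : Type*} [MetricSpace M] (ε : ℝ) (L : Set M) : Prop :=
  (∀ x ∈ L, ∀ y ∈ L, x ≠ y → ε ≤ dist x y) ∧ ∀ x : M, ∃ y ∈ L, dist x y ≤ ε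

/-- `M` is doubling with constant `D`: every ball of radius `R` is covered by at
most `D` balls of radius `R/2`. -/
def IsDoublingWith (M : Type*) [MetricSpace M] (D : ℝ) : Prop :=
  ∀ (x : M) (R : ℝ), 0 < R → ∃ t : Finset M,
    (t.card : ℝ) ≤ D ∧
      Metric.closedBall x R ⊆ ⋃ y ∈ t, Metric.closedBall y (R / 2)

/-- `M` is `(λ, r, C)`-homogeneous. -/
def IsHomog (M : Type*) [MetricSpace M] (lam r C : ℝ) : Prop :=
  ∀ ε : ℝ, 0 < ε → ∀ Lnet : Set M, IsNet ε Lnet → ∀ x : M,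
    (Lnet ∩ Metric.closedBall x (lam * ε)).Finite ∧
    ((Lnet ∩ Metric.closedBall x (lam * ε)).ncard : ℝ) ≤
      C * ((Lnet ∩ Metric.closedBall x (lam * ε * (1 - 3 * r))).ncard : ℝ)

/-- The vertex set of the hyperbolic approximation `G_k`: the disjoint union of
the layers `L_{-k}, …, L_k`. -/
def HypV (M : Type*) [MetricSpace M] (L : ℤ → Set M) (k : ℕ) : Type _ :=
  {p : ℤ × M // p.1 ∈ Finset.Icc (-(k : ℤ)) (k : ℤ) ∧ p.2 ∈ L p.1}

/-- The hyperbolic approximation graph `G_k`, with horizontal and radial edges. -/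
def hypGraph (lam r : ℝ) (M : Type*) [MetricSpace M] (L : ℤ → Set M) (k : ℕ) :
    SimpleGraph (HypV M L k) :=
  SimpleGraph.fromRel (fun u v =>
    (u.1.1 = v.1.1 ∧
      ∃ z : M, dist z u.1.2 ≤ lam * r ^ u.1.1 ∧ dist z v.1.2 ≤ lam * r ^ u.1.1) ∨
    (v.1.1 = u.1.1 + 1 ∧
      Metric.closedBall v.1.2 (lam * r ^ v.1.1) ⊆ Metric.closedBall u.1.2 (lam * r ^ u.1.1)))

/-- The set `N(v)` of radial neighbours in the layer `L_i` of a point `v` of the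
layer `L_{i+1}`. -/
def radialNbrs (lam r : ℝ) {M : Type*} [MetricSpace M] (L : ℤ → Set M) (i : ℤ)
    (v : M) : Set M :=
  {n | n ∈ L i ∧ Metric.closedBall v (lam * r ^ (i + 1)) ⊆ Metric.closedBall n (lam * r ^ i)}

/-- The measure `μ` on the layer `L_i` obtained by splitting the molecule
`ρ (δ_x - δ_y)` of the horizontal edge `{x,y} ⊆ L_{i+1}` radially down. -/
def hypMu (lam r : ℝ) {M : Type*} [MetricSpace M] (L : ℤ → Set M) (i : ℤ)
    (ρ : ℝ) (x y : M) : M → ℝ := fun n =>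
  (if n ∈ radialNbrs lam r L i x then ρ / ((radialNbrs lam r L i x).ncard : ℝ) else 0)
    - (if n ∈ radialNbrs lam r L i y then ρ / ((radialNbrs lam r L i y).ncard : ℝ) else 0)


end TCS

namespace TCS

section Aux

variable {M : Type*} [MetricSpace M] {L : ℤ → Set M} {k N : ℕ}

variable (Λ r : ℝ) (e : Fin (N+1) ≃ HypV M L k)

def ilvl (n : Fin (N+1)) : ℤ := (e n).1.1

def ipt (n : Fin (N+1)) : M := (e n).1.2

lemma ilvl_mem (n : Fin (N+1)) : -(k:ℤ) ≤ ilvl e n ∧ ilvl e n ≤ (k:ℤ) := by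
  have := (e n).2.1
  rw [Finset.mem_Icc] at this
  exact this

lemma ipt_mem (n : Fin (N+1)) : ipt e n ∈ L (ilvl e n) := (e n).2.2

lemma index_inj {n m : Fin (N+1)} (h1 : ilvl e n = ilvl e m) (h2 : ipt e n = ipt e m) :
    n = m := by
  apply e.injective
  have : ((e n : HypV M L k)).1 = (e m).1 := Prod.ext h1 h2
  exact Subtype.ext this

lemma index_surj (i : ℤ) (x : M) (h1 : -(k:ℤ) ≤ i) (h2 : i ≤ (k:ℤ)) (hx : x ∈ L i) :
    ∃ n, ilvl e n = i ∧ ipt e n = x := by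
  refine ⟨e.symm ⟨(i, x), Finset.mem_Icc.2 ⟨h1, h2⟩, hx⟩, ?_, ?_⟩
  · exact congrArg (fun p : HypV M L k => p.1.1) (e.apply_symm_apply _)
  · exact congrArg (fun p : HypV M L k => p.1.2) (e.apply_symm_apply _)

/-- The set of radial parents, in index space. -/
def ParF (n : Fin (N+1)) : Finset (Fin (N+1)) :=
  univ.filter (fun i => ilvl e i = ilvl e n - 1 ∧
    Metric.closedBall (ipt e n) (Λ * r ^ (ilvl e n)) ⊆
      Metric.closedBall (ipt e i) (Λ * r ^ (ilvl e i)))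

def lamF (n i : Fin (N+1)) : ℝ :=
  if i ∈ ParF Λ r e n then 1 / ((ParF Λ r e n).card : ℝ) else 0

def Bv (n : Fin (N+1)) : Fin (N+1) → ℝ := fun z => indic n z - lamF Λ r e n z

def Av (μ : Fin (N+1) → ℝ) (n : Fin (N+1)) : ℝ :=
  μ n + ∑ m ∈ (univ.filter (fun m : Fin (N+1) => ilvl e m = ilvl e n + 1)).attach,
    Av μ m.1 * lamF Λ r e m.1 n
termination_by ((k : ℤ) - ilvl e n).toNat
decreasing_by
  have hm := m.2
  simp only [Finset.mem_filter, Finset.mem_univ, true_and] at hm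
  have h2 := (ilvl_mem e m.1).2
  omega

lemma Av_eq (μ : Fin (N+1) → ℝ) (n : Fin (N+1)) :
    Av Λ r e μ n = μ n + ∑ m ∈ univ.filter (fun m : Fin (N+1) => ilvl e m = ilvl e n + 1),
      Av Λ r e μ m * lamF Λ r e m n := by
  rw [Av, ← Finset.sum_attach (univ.filter (fun m : Fin (N+1) => ilvl e m = ilvl e n + 1))
    (fun m => Av Λ r e μ m * lamF Λ r e m n)]

end Aux

end TCS

namespace TCS
section Aux2
variable {M : Type*} [MetricSpace M] {L : ℤ → Set M} {k N : ℕ}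
variable (Λ r : ℝ) (e : Fin (N+1) ≃ HypV M L k)

lemma lamF_nonneg (n i : Fin (N+1)) : 0 ≤ lamF Λ r e n i := by
  unfold lamF; split
  · positivity
  · exact le_refl 0

lemma lamF_ne_imp {n i : Fin (N+1)} (h : lamF Λ r e n i ≠ 0) : i ∈ ParF Λ r e n := by
  by_contra hc
  exact h (by simp [lamF, hc])

lemma parF_level {n i : Fin (N+1)} (h : i ∈ ParF Λ r e n) : ilvl e i = ilvl e n - 1 :=
  (Finset.mem_filter.1 h).2.1

lemma parF_ball {n i : Fin (N+1)} (h : i ∈ ParF Λ r e n) :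
    Metric.closedBall (ipt e n) (Λ * r ^ (ilvl e n)) ⊆
      Metric.closedBall (ipt e i) (Λ * r ^ (ilvl e i)) :=
  (Finset.mem_filter.1 h).2.2

lemma sum_lamF {n : Fin (N+1)} (h : (ParF Λ r e n).Nonempty) :
    ∑ i, lamF Λ r e n i = 1 := by
  have hcard : ((ParF Λ r e n).card : ℝ) ≠ 0 := by
    simpa using Finset.card_ne_zero_of_mem h.choose_spec
  rw [← Finset.sum_subset (Finset.subset_univ (ParF Λ r e n))
    (fun x _ hx => by simp [lamF, hx])]
  simp only [lamF]
  rw [Finset.sum_ite_mem, Finset.inter_self, Finset.sum_const, nsmul_eq_mul]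
  field_simp

lemma sum_lamF_subset {n : Fin (N+1)} (h : (ParF Λ r e n).Nonempty)
    {s : Finset (Fin (N+1))} (hs : ParF Λ r e n ⊆ s) :
    ∑ i ∈ s, lamF Λ r e n i = 1 := by
  rw [← sum_lamF Λ r e h]
  exact Finset.sum_subset (Finset.subset_univ s) (fun x _ hx => by
    have : x ∉ ParF Λ r e n := fun hc => hx (hs hc)
    simp [lamF, this])

/-- Existence of a radial parent for non-bottom vertices. -/
lemma parF_nonempty (hΛ : 2 ≤ Λ) (hr0 : 0 < r) (hr : r < 1/6)
    (hL : ∀ i : ℤ, IsNet (r ^ i) (L i)) {n : Fin (N+1)}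
    (h : -(k:ℤ) < ilvl e n) : (ParF Λ r e n).Nonempty := by
  obtain ⟨u, hu, hd⟩ := (hL (ilvl e n - 1)).2 (ipt e n)
  obtain ⟨m, hm1, hm2⟩ := index_surj e (ilvl e n - 1) u (by omega) (by
    have := (ilvl_mem e n).2; omega) hu
  refine ⟨m, Finset.mem_filter.2 ⟨Finset.mem_univ m, hm1, ?_⟩⟩
  intro p hp
  rw [Metric.mem_closedBall] at hp ⊢
  have h3 : dist p (ipt e m) ≤ dist p (ipt e n) + dist (ipt e n) (ipt e m) :=
    dist_triangle _ _ _
  have hrp : (0:ℝ) < r ^ (ilvl e n - 1) := zpow_pos hr0 _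
  have hzeq : r ^ (ilvl e n) = r ^ (ilvl e n - 1) * r := by
    rw [← zpow_add_one₀ (ne_of_gt hr0)]; ring_nf
  rw [hm1]
  have h6 : Λ * r + 1 ≤ Λ := by nlinarith
  have key : Λ * r ^ (ilvl e n) + r ^ (ilvl e n - 1) ≤ Λ * r ^ (ilvl e n - 1) := by
    have : r ^ (ilvl e n - 1) * (Λ * r + 1) ≤ r ^ (ilvl e n - 1) * Λ :=
      mul_le_mul_of_nonneg_left h6 hrp.le
    rw [hzeq]; nlinarith
  have hd' : dist (ipt e n) (ipt e m) ≤ r ^ (ilvl e n - 1) := by rw [hm2]; exact hd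
  calc dist p (ipt e m) ≤ dist p (ipt e n) + dist (ipt e n) (ipt e m) := h3
    _ ≤ Λ * r ^ (ilvl e n) + r ^ (ilvl e n - 1) := add_le_add hp hd'
    _ ≤ Λ * r ^ (ilvl e n - 1) := key

lemma parF_bot {n : Fin (N+1)} (h : ilvl e n = -(k:ℤ)) : ParF Λ r e n = ∅ := by
  ext i
  simp only [ParF, Finset.mem_filter, Finset.mem_univ, true_and, Finset.notMem_empty,
    iff_false]
  rintro ⟨h1, -⟩
  have := (ilvl_mem e i).1
  omega

lemma Av_add (μ ν : Fin (N+1) → ℝ) (n : Fin (N+1)) :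
    Av Λ r e (μ + ν) n = Av Λ r e μ n + Av Λ r e ν n := by
  rw [Av_eq, Av_eq, Av_eq]
  have : ∀ m ∈ univ.filter (fun m : Fin (N+1) => ilvl e m = ilvl e n + 1),
      Av Λ r e (μ + ν) m * lamF Λ r e m n
        = Av Λ r e μ m * lamF Λ r e m n + Av Λ r e ν m * lamF Λ r e m n := by
    intro m hm
    rw [Av_add μ ν m]; ring
  rw [Finset.sum_congr rfl this, Finset.sum_add_distrib]
  simp only [Pi.add_apply]; ring
termination_by ((k : ℤ) - ilvl e n).toNat
decreasing_by
  simp only [Finset.mem_filter, Finset.mem_univ, true_and] at hm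
  have h2 := (ilvl_mem e m).2
  omega

lemma Av_smul (c : ℝ) (μ : Fin (N+1) → ℝ) (n : Fin (N+1)) :
    Av Λ r e (c • μ) n = c * Av Λ r e μ n := by
  rw [Av_eq, Av_eq]
  have : ∀ m ∈ univ.filter (fun m : Fin (N+1) => ilvl e m = ilvl e n + 1),
      Av Λ r e (c • μ) m * lamF Λ r e m n = c * (Av Λ r e μ m * lamF Λ r e m n) := by
    intro m hm
    rw [Av_smul c μ m]; ring
  rw [Finset.sum_congr rfl this, ← Finset.mul_sum]
  simp only [Pi.smul_apply, smul_eq_mul]; ring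
termination_by ((k : ℤ) - ilvl e n).toNat
decreasing_by
  simp only [Finset.mem_filter, Finset.mem_univ, true_and] at hm
  have h2 := (ilvl_mem e m).2
  omega

lemma Av_zero (n : Fin (N+1)) : Av Λ r e 0 n = 0 := by
  have := Av_smul Λ r e 0 0 n
  simpa using this

end Aux2
end TCS

namespace TCS
section Aux3
variable {M : Type*} [MetricSpace M] {L : ℤ → Set M} {k N : ℕ}
variable (Λ r : ℝ) (e : Fin (N+1) ≃ HypV M L k)

lemma Av_nonneg (μ : Fin (N+1) → ℝ) (hμ : ∀ i, 0 ≤ μ i) (n : Fin (N+1)) :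
    0 ≤ Av Λ r e μ n := by
  rw [Av_eq]
  have hs : 0 ≤ ∑ m ∈ univ.filter (fun m : Fin (N+1) => ilvl e m = ilvl e n + 1),
      Av Λ r e μ m * lamF Λ r e m n := by
    apply Finset.sum_nonneg
    intro m hm
    simp only [Finset.mem_filter, Finset.mem_univ, true_and] at hm
    have h2 := (ilvl_mem e m).2
    exact mul_nonneg (Av_nonneg μ hμ m) (lamF_nonneg Λ r e m n)
  have := hμ n
  linarith
termination_by ((k : ℤ) - ilvl e n).toNat
decreasing_by
  simp only [Finset.mem_filter, Finset.mem_univ, true_and] at hm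
  have hk2 := (ilvl_mem e m).2
  omega

lemma Av_level_gt {x : Fin (N+1)} (n : Fin (N+1)) (h : ilvl e x < ilvl e n) :
    Av Λ r e (indic x) n = 0 := by
  rw [Av_eq]
  have h1 : indic x n = 0 := by
    have : n ≠ x := fun hc => by rw [hc] at h; omega
    simp [indic, this]
  have h2 : ∀ m ∈ univ.filter (fun m : Fin (N+1) => ilvl e m = ilvl e n + 1),
      Av Λ r e (indic x) m * lamF Λ r e m n = 0 := by
    intro m hm
    simp only [Finset.mem_filter, Finset.mem_univ, true_and] at hm
    have h2 := (ilvl_mem e m).2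
    rw [Av_level_gt m (by omega)]
    ring
  rw [Finset.sum_congr rfl h2, h1]
  simp
termination_by ((k : ℤ) - ilvl e n).toNat
decreasing_by
  simp only [Finset.mem_filter, Finset.mem_univ, true_and] at hm
  have hk2 := (ilvl_mem e m).2
  omega

lemma Av_own_level {x : Fin (N+1)} (n : Fin (N+1)) (h : ilvl e n = ilvl e x) :
    Av Λ r e (indic x) n = indic x n := by
  rw [Av_eq]
  have h2 : ∀ m ∈ univ.filter (fun m : Fin (N+1) => ilvl e m = ilvl e n + 1),
      Av Λ r e (indic x) m * lamF Λ r e m n = 0 := by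
    intro m hm
    simp only [Finset.mem_filter, Finset.mem_univ, true_and] at hm
    rw [Av_level_gt Λ r e m (by omega)]
    ring
  rw [Finset.sum_congr rfl h2]
  simp

lemma Av_ball {x : Fin (N+1)} (n : Fin (N+1)) (h : Av Λ r e (indic x) n ≠ 0) :
    Metric.closedBall (ipt e x) (Λ * r ^ (ilvl e x)) ⊆
      Metric.closedBall (ipt e n) (Λ * r ^ (ilvl e n)) := by
  by_cases hx : n = x
  · subst hx; exact subset_rfl
  · rw [Av_eq] at h
    have h1 : indic x n = 0 := by simp [indic, hx]
    rw [h1, zero_add] at h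
    obtain ⟨m, hm, hne⟩ := Finset.exists_ne_zero_of_sum_ne_zero h
    simp only [Finset.mem_filter, Finset.mem_univ, true_and] at hm
    have hAv : Av Λ r e (indic x) m ≠ 0 := fun hc => hne (by rw [hc]; ring)
    have hlam : lamF Λ r e m n ≠ 0 := fun hc => hne (by rw [hc]; ring)
    have hpar := lamF_ne_imp Λ r e hlam
    have h2 := (ilvl_mem e m).2
    exact subset_trans (Av_ball m hAv) (parF_ball Λ r e hpar)
termination_by ((k : ℤ) - ilvl e n).toNat
decreasing_by
  simp only [Finset.mem_filter, Finset.mem_univ, true_and] at hm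
  have hk2 := (ilvl_mem e m).2
  omega

lemma Av_level_le {x : Fin (N+1)} (n : Fin (N+1)) (h : Av Λ r e (indic x) n ≠ 0) :
    ilvl e n ≤ ilvl e x := by
  by_contra hc
  exact h (Av_level_gt Λ r e n (by omega))

/-- mass conservation level by level -/
lemma Av_mass (hΛ : 2 ≤ Λ) (hr0 : 0 < r) (hr : r < 1/6)
    (hL : ∀ i : ℤ, IsNet (r ^ i) (L i)) (x : Fin (N+1)) :
    ∀ (s : ℕ), -(k:ℤ) ≤ ilvl e x - s →
      ∑ v ∈ univ.filter (fun v : Fin (N+1) => ilvl e v = ilvl e x - s),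
        Av Λ r e (indic x) v = 1 := by
  intro s
  induction s with
  | zero =>
    intro _
    have : ∀ v ∈ univ.filter (fun v : Fin (N+1) => ilvl e v = ilvl e x - (0:ℕ)),
        Av Λ r e (indic x) v = indic x v := by
      intro v hv
      simp only [Finset.mem_filter, Finset.mem_univ, true_and] at hv
      exact Av_own_level Λ r e v (by omega)
    rw [Finset.sum_congr rfl this]
    have hx : x ∈ univ.filter (fun v : Fin (N+1) => ilvl e v = ilvl e x - (0:ℕ)) := by
      simp
    rw [Finset.sum_eq_single_of_mem x hx (fun b _ hb => by simp [indic, hb])]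
    simp [indic]
  | succ s ih =>
    intro hs
    have hs' : -(k:ℤ) ≤ ilvl e x - s := by push_cast at hs ⊢; omega
    have key : ∀ v ∈ univ.filter (fun v : Fin (N+1) => ilvl e v = ilvl e x - (s+1:ℕ)),
        Av Λ r e (indic x) v =
          ∑ m ∈ univ.filter (fun m : Fin (N+1) => ilvl e m = ilvl e x - s),
            Av Λ r e (indic x) m * lamF Λ r e m v := by
      intro v hv
      simp only [Finset.mem_filter, Finset.mem_univ, true_and] at hv
      rw [Av_eq]
      have h1 : indic x v = 0 := by
        have : v ≠ x := by
          intro hc; subst hc; push_cast at hv; omega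
        simp [indic, this]
      rw [h1, zero_add]
      apply Finset.sum_congr
      · ext m
        simp only [Finset.mem_filter, Finset.mem_univ, true_and]
        constructor
        · intro h; push_cast at hv ⊢; omega
        · intro h; push_cast at hv h ⊢; omega
      · intros; rfl
    rw [Finset.sum_congr rfl key, Finset.sum_comm]
    have inner : ∀ m ∈ univ.filter (fun m : Fin (N+1) => ilvl e m = ilvl e x - s),
        ∑ v ∈ univ.filter (fun v : Fin (N+1) => ilvl e v = ilvl e x - (s+1:ℕ)),
          Av Λ r e (indic x) m * lamF Λ r e m v = Av Λ r e (indic x) m := by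
      intro m hm
      simp only [Finset.mem_filter, Finset.mem_univ, true_and] at hm
      rw [← Finset.mul_sum]
      have hne : (ParF Λ r e m).Nonempty := by
        apply parF_nonempty Λ r e hΛ hr0 hr hL
        push_cast at hs
        omega
      rw [sum_lamF_subset Λ r e hne (fun i hi => by
        have h1 := parF_level Λ r e hi
        simp only [Finset.mem_filter, Finset.mem_univ, true_and]
        push_cast
        omega)]
      ring
    rw [Finset.sum_congr rfl inner]
    exact ih hs'

end Aux3
end TCS

namespace TCS

section Aux4
variable {M : Type*} [MetricSpace M] {L : ℤ → Set M} {k N : ℕ}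
variable (Λ r : ℝ) (e : Fin (N+1) ≃ HypV M L k)

lemma Av_mass' (hΛ : 2 ≤ Λ) (hr0 : 0 < r) (hr : r < 1/6)
    (hL : ∀ i : ℤ, IsNet (r ^ i) (L i)) (x : Fin (N+1)) (t : ℤ)
    (h1 : -(k:ℤ) ≤ t) (h2 : t ≤ ilvl e x) :
    ∑ v ∈ univ.filter (fun v : Fin (N+1) => ilvl e v = t), Av Λ r e (indic x) v = 1 := by
  have hs : ((ilvl e x - t).toNat : ℤ) = ilvl e x - t := Int.toNat_of_nonneg (by omega)
  have := Av_mass Λ r e hΛ hr0 hr hL x (ilvl e x - t).toNat (by omega)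
  rw [← this]
  apply Finset.sum_congr _ (fun _ _ => rfl)
  ext v
  simp only [Finset.mem_filter, Finset.mem_univ, true_and]
  omega

lemma card_level_ball (i : ℤ) (h1 : -(k:ℤ) ≤ i) (h2 : i ≤ (k:ℤ)) (z : M) (R : ℝ) :
    (univ.filter (fun u : Fin (N+1) => ilvl e u = i ∧ dist (ipt e u) z ≤ R)).card
      = (L i ∩ Metric.closedBall z R).ncard := by
  classical
  set F := univ.filter (fun u : Fin (N+1) => ilvl e u = i ∧ dist (ipt e u) z ≤ R) with hF
  have himg : ((F.image (ipt e)) : Set M) = L i ∩ Metric.closedBall z R := by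
    ext p
    simp only [Finset.coe_image, Set.mem_image, Finset.mem_coe, hF, Finset.mem_filter,
      Finset.mem_univ, true_and, Set.mem_inter_iff, Metric.mem_closedBall]
    constructor
    · rintro ⟨u, ⟨hu1, hu2⟩, rfl⟩
      exact ⟨by rw [← hu1]; exact ipt_mem e u, hu2⟩
    · rintro ⟨hp1, hp2⟩
      obtain ⟨n, hn1, hn2⟩ := index_surj e i p h1 h2 hp1
      exact ⟨n, ⟨hn1, by rw [hn2]; exact hp2⟩, hn2⟩
  have hinj : Set.InjOn (ipt e) ↑F := by
    intro a ha b hb hab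
    simp only [hF, Finset.coe_filter, Set.mem_setOf_eq] at ha hb
    exact index_inj e (by omega) hab
  rw [← himg, Set.ncard_coe_finset, Finset.card_image_of_injOn hinj]

lemma homog_count {C : ℝ} (hhom : IsHomog M Λ r C) (hr0 : 0 < r)
    (hL : ∀ i : ℤ, IsNet (r ^ i) (L i)) (i : ℤ) (h1 : -(k:ℤ) ≤ i) (h2 : i ≤ (k:ℤ)) (z : M) :
    ((univ.filter (fun u : Fin (N+1) => ilvl e u = i ∧ dist (ipt e u) z ≤ Λ * r ^ i)).card : ℝ)
      ≤ C * ((univ.filter (fun u : Fin (N+1) =>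
          ilvl e u = i ∧ dist (ipt e u) z ≤ Λ * r ^ i * (1 - 3 * r))).card : ℝ) := by
  have h := (hhom (r ^ i) (zpow_pos hr0 i) (L i) (hL i) z).2
  rw [card_level_ball e i h1 h2 z (Λ * r ^ i), card_level_ball e i h1 h2 z (Λ * r ^ i * (1 - 3*r))]
  exact h

end Aux4
end TCS

namespace TCS
section Aux5
variable {M : Type*} [MetricSpace M] {L : ℤ → Set M} {k N : ℕ}
variable (Λ r : ℝ) (e : Fin (N+1) ≃ HypV M L k)

lemma contract_step (hΛ : 2 ≤ Λ) (hr0 : 0 < r) (hr : r < 1/6) {C : ℝ} (hC : 1 < C)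
    (hL : ∀ i : ℤ, IsNet (r ^ i) (L i)) (hhom : IsHomog M Λ r C)
    (x y : Fin (N+1)) (z : M)
    (hzx : z ∈ Metric.closedBall (ipt e x) (Λ * r ^ (ilvl e x)))
    (hzy : z ∈ Metric.closedBall (ipt e y) (Λ * r ^ (ilvl e y)))
    (t : ℤ) (htx : t ≤ ilvl e x) (hty : t ≤ ilvl e y) (htk : -(k:ℤ) ≤ t - 1) :
    ∑ u ∈ univ.filter (fun u : Fin (N+1) => ilvl e u = t - 1),
        |Av Λ r e (indic x) u - Av Λ r e (indic y) u|
      ≤ (1 - 1/C) * ∑ v ∈ univ.filter (fun v : Fin (N+1) => ilvl e v = t),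
          |Av Λ r e (indic x) v - Av Λ r e (indic y) v| := by
  classical
  set W : Fin (N+1) → ℝ := fun v => Av Λ r e (indic x) v - Av Λ r e (indic y) v with hW
  set T : Finset (Fin (N+1)) := univ.filter (fun v : Fin (N+1) => ilvl e v = t) with hT
  set U : Finset (Fin (N+1)) := univ.filter (fun u : Fin (N+1) => ilvl e u = t - 1) with hU
  set K : Finset (Fin (N+1)) := univ.filter (fun u : Fin (N+1) =>
    ilvl e u = t - 1 ∧ dist (ipt e u) z ≤ Λ * r ^ (t-1) * (1 - 3*r)) with hK
  set Bt : Finset (Fin (N+1)) := univ.filter (fun u : Fin (N+1) =>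
    ilvl e u = t - 1 ∧ dist (ipt e u) z ≤ Λ * r ^ (t-1)) with hBt
  show (∑ u ∈ U, |W u|) ≤ (1 - 1/C) * ∑ v ∈ T, |W v|
  have htk2 : t ≤ (k:ℤ) := le_trans htx (ilvl_mem e x).2
  have hCpos : (0:ℝ) < C := by linarith
  have hγ : (0:ℝ) ≤ 1 - 1/C := by
    have : 1/C < 1 := by rw [div_lt_one hCpos]; exact hC
    linarith
  have hrp : (0:ℝ) < r ^ (t-1) := zpow_pos hr0 _
  have hzeq : r ^ t = r ^ (t-1) * r := by
    rw [← zpow_add_one₀ (ne_of_gt hr0)]; ring_nf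
  have hcard : (Bt.card : ℝ) ≤ C * (K.card : ℝ) :=
    homog_count Λ r e hhom hr0 hL (t-1) htk (by omega) z
  -- relevance
  have hrel : ∀ v, ilvl e v = t → W v ≠ 0 → dist z (ipt e v) ≤ Λ * r ^ t := by
    intro v hv hWv
    have : Av Λ r e (indic x) v ≠ 0 ∨ Av Λ r e (indic y) v ≠ 0 := by
      by_contra hcon
      push_neg at hcon
      exact hWv (by rw [hW]; simp [hcon.1, hcon.2])
    rcases this with h | h
    · have := Av_ball Λ r e v h hzx
      rw [Metric.mem_closedBall, hv] at this; exact this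
    · have := Av_ball Λ r e v h hzy
      rw [Metric.mem_closedBall, hv] at this; exact this
  have hKsub : ∀ v, ilvl e v = t → dist z (ipt e v) ≤ Λ * r ^ t → K ⊆ ParF Λ r e v := by
    intro v hv hzv u hu
    rw [hK, Finset.mem_filter] at hu
    obtain ⟨-, hu1, hu2⟩ := hu
    rw [ParF, Finset.mem_filter]
    refine ⟨Finset.mem_univ u, by omega, ?_⟩
    intro p hp
    rw [Metric.mem_closedBall] at hp ⊢
    rw [hv] at hp
    have htri : dist p (ipt e u) ≤ dist p (ipt e v) + dist (ipt e v) z + dist z (ipt e u) :=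
      dist_triangle4 p (ipt e v) z (ipt e u)
    have h1 : dist (ipt e v) z = dist z (ipt e v) := dist_comm _ _
    have h2 : dist z (ipt e u) = dist (ipt e u) z := dist_comm _ _
    have hsum : dist p (ipt e u) ≤ Λ * r ^ t + Λ * r ^ t + Λ * r ^ (t-1) * (1 - 3*r) := by
      rw [h1] at htri
      rw [h2] at htri
      linarith
    rw [hu1]
    have hp : (0:ℝ) < Λ * r ^ (t-1) := mul_pos (by linarith) hrp
    have : Λ * r ^ t + Λ * r ^ t + Λ * r ^ (t-1) * (1 - 3*r) ≤ Λ * r ^ (t-1) := by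
      rw [hzeq]; nlinarith [mul_pos hp hr0, hp]
    linarith
  have hPsub : ∀ v, ilvl e v = t → dist z (ipt e v) ≤ Λ * r ^ t → ParF Λ r e v ⊆ Bt := by
    intro v hv hzv u hu
    have hlev := parF_level Λ r e hu
    have hball := parF_ball Λ r e hu
    rw [hBt, Finset.mem_filter]
    refine ⟨Finset.mem_univ u, by omega, ?_⟩
    have hz2 : z ∈ Metric.closedBall (ipt e v) (Λ * r ^ (ilvl e v)) := by
      rw [Metric.mem_closedBall, hv]; exact hzv
    have := hball hz2
    rw [Metric.mem_closedBall] at this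
    rw [hlev, hv] at this
    simpa [dist_comm] using this
  -- difference formula at level t-1
  have hdiff : ∀ u ∈ U, W u = ∑ v ∈ T, W v * lamF Λ r e v u := by
    intro u hu
    rw [hU, Finset.mem_filter] at hu
    obtain ⟨-, hu1⟩ := hu
    have hfil : univ.filter (fun m : Fin (N+1) => ilvl e m = ilvl e u + 1) = T := by
      ext m
      rw [hT]
      simp only [Finset.mem_filter, Finset.mem_univ, true_and]
      omega
    have hix : indic x u = 0 := by
      have : u ≠ x := fun hc => by rw [hc] at hu1; omega
      simp [indic, this]
    have hiy : indic y u = 0 := by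
      have : u ≠ y := fun hc => by rw [hc] at hu1; omega
      simp [indic, this]
    rw [hW]
    simp only
    rw [Av_eq, Av_eq, hfil, hix, hiy, zero_add, zero_add, ← Finset.sum_sub_distrib]
    exact Finset.sum_congr rfl (fun v _ => by ring)
  have hsumW : ∑ v ∈ T, W v = 0 := by
    rw [hW]
    simp only
    rw [Finset.sum_sub_distrib, hT,
      Av_mass' Λ r e hΛ hr0 hr hL x t (by omega) htx,
      Av_mass' Λ r e hΛ hr0 hr hL y t (by omega) hty]
    ring
  by_cases hWT : ∀ v ∈ T, W v = 0
  · have e1 : ∑ u ∈ U, |W u| = 0 := Finset.sum_eq_zero (fun u hu => by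
      rw [hdiff u hu, Finset.sum_eq_zero (fun v hv => by rw [hWT v hv]; ring)]
      simp)
    have e2 : ∑ v ∈ T, |W v| = 0 := Finset.sum_eq_zero (fun v hv => by rw [hWT v hv]; simp)
    rw [e1, e2]
    simp
  · push_neg at hWT
    obtain ⟨v₀, hv₀T, hWv₀⟩ := hWT
    have hv₀lvl : ilvl e v₀ = t := by
      rw [hT, Finset.mem_filter] at hv₀T; exact hv₀T.2
    have hzv₀ := hrel v₀ hv₀lvl hWv₀
    have hPne₀ : (ParF Λ r e v₀).Nonempty :=
      parF_nonempty Λ r e hΛ hr0 hr hL (by omega)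
    have hBtpos : 1 ≤ Bt.card :=
      le_trans (Finset.card_pos.2 hPne₀) (Finset.card_le_card (hPsub v₀ hv₀lvl hzv₀))
    have hKpos : 1 ≤ K.card := by
      by_contra hc
      have : K.card = 0 := by omega
      rw [this] at hcard
      have : (Bt.card : ℝ) ≤ 0 := by simpa using hcard
      have : (1:ℝ) ≤ (Bt.card : ℝ) := by exact_mod_cast hBtpos
      linarith
    have hKcR : (0:ℝ) < (K.card : ℝ) := by exact_mod_cast hKpos
    set c0 : ℝ := 1 / (C * K.card) with hc0
    have hc0pos : 0 < c0 := by rw [hc0]; positivity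
    -- lamF lower bound on K for relevant v
    have hlamK : ∀ v, ilvl e v = t → W v ≠ 0 → ∀ u ∈ K, c0 ≤ lamF Λ r e v u := by
      intro v hv hWv u hu
      have hzv := hrel v hv hWv
      have huP : u ∈ ParF Λ r e v := hKsub v hv hzv hu
      have hPle : ((ParF Λ r e v).card : ℝ) ≤ C * K.card := by
        calc ((ParF Λ r e v).card : ℝ) ≤ (Bt.card : ℝ) := by
              exact_mod_cast Finset.card_le_card (hPsub v hv hzv)
          _ ≤ C * K.card := hcard
      have hPpos : (0:ℝ) < ((ParF Λ r e v).card : ℝ) := by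
        exact_mod_cast Finset.card_pos.2 ⟨u, huP⟩
      rw [lamF, if_pos huP, hc0]
      exact one_div_le_one_div_of_le hPpos hPle
    -- K ⊆ U
    have hKU : K ⊆ U := by
      intro u hu
      rw [hK, Finset.mem_filter] at hu
      rw [hU, Finset.mem_filter]
      exact ⟨Finset.mem_univ u, hu.2.1⟩
    have hKcardU : ∑ u ∈ U, (if u ∈ K then (1:ℝ) else 0) = (K.card : ℝ) := by
      rw [Finset.sum_ite_mem, Finset.inter_eq_right.2 hKU, Finset.sum_const, nsmul_eq_mul]
      ring
    -- step 1: pointwise bound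
    have step1 : ∀ u ∈ U, |W u| ≤ ∑ v ∈ T, |W v| * (lamF Λ r e v u - c0 * (if u ∈ K then (1:ℝ) else 0)) := by
      intro u hu
      set χ : ℝ := if u ∈ K then (1:ℝ) else 0 with hχ
      have hχ0 : 0 ≤ χ := by rw [hχ]; split <;> norm_num
      have hshift : ∑ v ∈ T, W v * (lamF Λ r e v u - c0 * χ)
          = ∑ v ∈ T, W v * lamF Λ r e v u := by
        simp only [mul_sub]
        rw [Finset.sum_sub_distrib, ← Finset.sum_mul, hsumW]
        ring
      calc |W u| = |∑ v ∈ T, W v * (lamF Λ r e v u - c0 * χ)| := by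
            rw [hshift, ← hdiff u hu]
        _ ≤ ∑ v ∈ T, |W v * (lamF Λ r e v u - c0 * χ)| := Finset.abs_sum_le_sum_abs _ _
        _ ≤ ∑ v ∈ T, |W v| * (lamF Λ r e v u - c0 * χ) := by
            apply Finset.sum_le_sum
            intro v hv
            rw [abs_mul]
            by_cases hWv : W v = 0
            · simp [hWv]
            · have hvl : ilvl e v = t := by
                rw [hT, Finset.mem_filter] at hv; exact hv.2
              have hX : 0 ≤ lamF Λ r e v u - c0 * χ := by
                by_cases huK : u ∈ K
                · rw [hχ, if_pos huK, mul_one, sub_nonneg]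
                  exact hlamK v hvl hWv u huK
                · rw [hχ, if_neg huK, mul_zero, sub_zero]
                  exact lamF_nonneg Λ r e v u
              rw [abs_of_nonneg hX]
    -- main chain
    have hParU : ∀ v, ilvl e v = t → ParF Λ r e v ⊆ U := by
      intro v hv i hi
      have := parF_level Λ r e hi
      rw [hU, Finset.mem_filter]
      exact ⟨Finset.mem_univ i, by omega⟩
    calc ∑ u ∈ U, |W u|
        ≤ ∑ u ∈ U, ∑ v ∈ T, |W v| * (lamF Λ r e v u - c0 * (if u ∈ K then (1:ℝ) else 0)) :=
          Finset.sum_le_sum step1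
      _ = ∑ v ∈ T, ∑ u ∈ U, |W v| * (lamF Λ r e v u - c0 * (if u ∈ K then (1:ℝ) else 0)) :=
          Finset.sum_comm
      _ = ∑ v ∈ T, (|W v| * (∑ u ∈ U, lamF Λ r e v u) - |W v| * (c0 * (K.card : ℝ))) := by
          apply Finset.sum_congr rfl
          intro v _
          simp only [mul_sub]
          rw [Finset.sum_sub_distrib, ← Finset.mul_sum]
          congr 1
          have : ∑ u ∈ U, |W v| * (c0 * (if u ∈ K then (1:ℝ) else 0))
              = |W v| * c0 * ∑ u ∈ U, (if u ∈ K then (1:ℝ) else 0) := by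
            rw [Finset.mul_sum]
            exact Finset.sum_congr rfl (fun u _ => by ring)
          rw [this, hKcardU]
          ring
      _ ≤ ∑ v ∈ T, |W v| * (1 - 1/C) := by
          apply Finset.sum_le_sum
          intro v hv
          have hvl : ilvl e v = t := by
            rw [hT, Finset.mem_filter] at hv; exact hv.2
          by_cases hWv : W v = 0
          · simp [hWv]
          · have hPne : (ParF Λ r e v).Nonempty :=
              parF_nonempty Λ r e hΛ hr0 hr hL (by omega)
            rw [sum_lamF_subset Λ r e hPne (hParU v hvl)]
            have hc0K : c0 * (K.card : ℝ) = 1/C := by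
              rw [hc0]
              field_simp
            rw [hc0K]
            apply le_of_eq
            ring
      _ = (1 - 1/C) * ∑ v ∈ T, |W v| := by
          rw [Finset.mul_sum]
          exact Finset.sum_congr rfl (fun v _ => by ring)
end Aux5
end TCS

namespace TCS
section Aux6
variable {M : Type*} [MetricSpace M] {L : ℤ → Set M} {k N : ℕ}
variable (Λ r : ℝ) (e : Fin (N+1) ≃ HypV M L k)

lemma geom_aux {γ : ℝ} (h0 : 0 ≤ γ) (h1 : γ < 1) (n : ℕ) :
    ∑ s ∈ Finset.range n, γ ^ s ≤ 1 / (1 - γ) := by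
  rw [geom_sum_eq (by intro hc; rw [hc] at h1; linarith) n]
  have key : (γ ^ n - 1) / (γ - 1) = (1 - γ ^ n) / (1 - γ) := by
    rw [← neg_div_neg_eq]; ring_nf
  rw [key, div_le_div_iff₀ (by linarith) (by linarith)]
  have : 0 ≤ γ ^ n := pow_nonneg h0 n
  nlinarith

lemma contract_iter (hΛ : 2 ≤ Λ) (hr0 : 0 < r) (hr : r < 1/6) {C : ℝ} (hC : 1 < C)
    (hL : ∀ i : ℤ, IsNet (r ^ i) (L i)) (hhom : IsHomog M Λ r C)
    (x y : Fin (N+1)) (z : M)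
    (hzx : z ∈ Metric.closedBall (ipt e x) (Λ * r ^ (ilvl e x)))
    (hzy : z ∈ Metric.closedBall (ipt e y) (Λ * r ^ (ilvl e y)))
    (t0 : ℤ) (ht0x : t0 ≤ ilvl e x) (ht0y : t0 ≤ ilvl e y) :
    ∀ s : ℕ, ∑ u ∈ univ.filter (fun u : Fin (N+1) => ilvl e u = t0 - s),
        |Av Λ r e (indic x) u - Av Λ r e (indic y) u|
      ≤ (1 - 1/C) ^ s * ∑ v ∈ univ.filter (fun v : Fin (N+1) => ilvl e v = t0),
          |Av Λ r e (indic x) v - Av Λ r e (indic y) v| := by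
  have hCpos : (0:ℝ) < C := by linarith
  have hγ0 : (0:ℝ) ≤ 1 - 1/C := by
    have : 1/C < 1 := by rw [div_lt_one hCpos]; exact hC
    linarith
  intro s
  induction s with
  | zero => simp
  | succ s ih =>
    by_cases hcase : -(k:ℤ) ≤ t0 - s - 1
    · have step := contract_step Λ r e hΛ hr0 hr hC hL hhom x y z hzx hzy (t0 - s)
        (by omega) (by omega) (by omega)
      have hfil : univ.filter (fun u : Fin (N+1) => ilvl e u = t0 - (s+1:ℕ))
          = univ.filter (fun u : Fin (N+1) => ilvl e u = t0 - s - 1) := by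
        ext u
        simp only [Finset.mem_filter, Finset.mem_univ, true_and]
        push_cast
        omega
      rw [hfil]
      calc ∑ u ∈ univ.filter (fun u : Fin (N+1) => ilvl e u = t0 - s - 1),
            |Av Λ r e (indic x) u - Av Λ r e (indic y) u|
          ≤ (1 - 1/C) * ∑ v ∈ univ.filter (fun v : Fin (N+1) => ilvl e v = t0 - s),
              |Av Λ r e (indic x) v - Av Λ r e (indic y) v| := step
        _ ≤ (1 - 1/C) * ((1 - 1/C) ^ s * ∑ v ∈ univ.filter (fun v : Fin (N+1) => ilvl e v = t0),
              |Av Λ r e (indic x) v - Av Λ r e (indic y) v|) :=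
            mul_le_mul_of_nonneg_left ih hγ0
        _ = (1 - 1/C) ^ (s+1) * ∑ v ∈ univ.filter (fun v : Fin (N+1) => ilvl e v = t0),
              |Av Λ r e (indic x) v - Av Λ r e (indic y) v| := by ring
    · have hempty : univ.filter (fun u : Fin (N+1) => ilvl e u = t0 - (s+1:ℕ)) = ∅ := by
        ext u
        simp only [Finset.mem_filter, Finset.mem_univ, true_and, Finset.notMem_empty, iff_false]
        intro hc
        have := (ilvl_mem e u).1
        push_cast at hc
        omega
      rw [hempty]
      simp only [Finset.sum_empty]
      positivity

end Aux6
end TCS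

namespace TCS
section Aux7
variable {M : Type*} [MetricSpace M] {L : ℤ → Set M} {k N : ℕ}
variable (Λ r : ℝ) (e : Fin (N+1) ≃ HypV M L k)

lemma heart0 (hΛ : 2 ≤ Λ) (hr0 : 0 < r) (hr : r < 1/6) {C : ℝ} (hC : 1 < C)
    (hL : ∀ i : ℤ, IsNet (r ^ i) (L i)) (hhom : IsHomog M Λ r C)
    (x y : Fin (N+1)) (z : M)
    (hzx : z ∈ Metric.closedBall (ipt e x) (Λ * r ^ (ilvl e x)))
    (hzy : z ∈ Metric.closedBall (ipt e y) (Λ * r ^ (ilvl e y)))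
    (hyx : ilvl e y ≤ ilvl e x) (hxy1 : ilvl e x ≤ ilvl e y + 1) :
    ∑ v, |Av Λ r e (indic x) v - Av Λ r e (indic y) v| ≤ 1 + 2*C := by
  classical
  have hCpos : (0:ℝ) < C := by linarith
  have hγ0 : (0:ℝ) ≤ 1 - 1/C := by
    have : 1/C < 1 := by rw [div_lt_one hCpos]; exact hC
    linarith
  have hγ1 : 1 - 1/C < 1 := by
    have : 0 < 1/C := by positivity
    linarith
  set F : Fin (N+1) → ℝ := fun v => |Av Λ r e (indic x) v - Av Λ r e (indic y) v| with hF
  have hF0 : ∀ v, 0 ≤ F v := fun v => abs_nonneg _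
  set ly := ilvl e y with hly
  set lx := ilvl e x with hlx
  have hky : -(k:ℤ) ≤ ly := (ilvl_mem e y).1
  have hkx : lx ≤ (k:ℤ) := (ilvl_mem e x).2
  have hfib : ∑ v, F v = ∑ t ∈ Finset.Icc (-(k:ℤ)) (k:ℤ),
      ∑ v ∈ univ.filter (fun v : Fin (N+1) => ilvl e v = t), F v := by
    rw [Finset.sum_fiberwise_of_maps_to (fun v _ => Finset.mem_Icc.2 (ilvl_mem e v)) F]
  have hsplit : Finset.Icc (-(k:ℤ)) (k:ℤ) = Finset.Icc (-(k:ℤ)) ly ∪ Finset.Ioc ly (k:ℤ) := by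
    ext a
    simp only [Finset.mem_Icc, Finset.mem_union, Finset.mem_Ioc]
    omega
  have hdisj : Disjoint (Finset.Icc (-(k:ℤ)) ly) (Finset.Ioc ly (k:ℤ)) := by
    rw [Finset.disjoint_left]
    intro a ha hb
    simp only [Finset.mem_Icc] at ha
    simp only [Finset.mem_Ioc] at hb
    omega
  -- Part B : levels above ly
  have hPartB : ∑ t ∈ Finset.Ioc ly (k:ℤ),
      ∑ v ∈ univ.filter (fun v : Fin (N+1) => ilvl e v = t), F v ≤ 1 := by
    have hB : ∀ t ∈ Finset.Ioc ly (k:ℤ),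
        ∑ v ∈ univ.filter (fun v : Fin (N+1) => ilvl e v = t), F v
          ≤ (if t = lx then (1:ℝ) else 0) := by
      intro t ht
      rw [Finset.mem_Ioc] at ht
      by_cases hte : t = lx
      · rw [if_pos hte]
        have hmm : ∀ v ∈ univ.filter (fun v : Fin (N+1) => ilvl e v = t), F v = indic x v := by
          intro v hv
          rw [Finset.mem_filter] at hv
          rw [hF]
          simp only
          rw [Av_level_gt Λ r e (x := y) v (by omega), Av_own_level Λ r e (x := x) v (by omega),
            sub_zero]
          exact abs_of_nonneg (by unfold indic; split <;> norm_num)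
        have hxmem : x ∈ univ.filter (fun v : Fin (N+1) => ilvl e v = t) := by
          simp only [Finset.mem_filter, Finset.mem_univ, true_and]
          omega
        rw [Finset.sum_congr rfl hmm,
          Finset.sum_eq_single_of_mem x hxmem (fun b _ hb => by simp [indic, hb])]
        simp [indic]
      · rw [if_neg hte]
        apply le_of_eq
        apply Finset.sum_eq_zero
        intro v hv
        rw [Finset.mem_filter] at hv
        rw [hF]
        simp only
        rw [Av_level_gt Λ r e (x := y) v (by omega), Av_level_gt Λ r e (x := x) v (by omega)]
        simp
    calc ∑ t ∈ Finset.Ioc ly (k:ℤ),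
        ∑ v ∈ univ.filter (fun v : Fin (N+1) => ilvl e v = t), F v
        ≤ ∑ t ∈ Finset.Ioc ly (k:ℤ), (if t = lx then (1:ℝ) else 0) := Finset.sum_le_sum hB
      _ = (if lx ∈ Finset.Ioc ly (k:ℤ) then (1:ℝ) else 0) := by
          rw [Finset.sum_ite_eq' (Finset.Ioc ly (k:ℤ)) lx (fun _ => (1:ℝ))]
      _ ≤ 1 := by split <;> norm_num
  -- Part A : levels at most ly
  have hSly : ∑ v ∈ univ.filter (fun v : Fin (N+1) => ilvl e v = ly), F v ≤ 2 := by
    have hterm : ∀ v ∈ univ.filter (fun v : Fin (N+1) => ilvl e v = ly), F v ≤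
        Av Λ r e (indic x) v + Av Λ r e (indic y) v := by
      intro v _
      rw [hF]
      simp only
      have h1 : 0 ≤ Av Λ r e (indic x) v :=
        Av_nonneg Λ r e _ (fun i => by unfold indic; split <;> norm_num) v
      have h2 : 0 ≤ Av Λ r e (indic y) v :=
        Av_nonneg Λ r e _ (fun i => by unfold indic; split <;> norm_num) v
      calc |Av Λ r e (indic x) v - Av Λ r e (indic y) v|
          ≤ |Av Λ r e (indic x) v| + |Av Λ r e (indic y) v| := abs_sub _ _
        _ = Av Λ r e (indic x) v + Av Λ r e (indic y) v := by
            rw [abs_of_nonneg h1, abs_of_nonneg h2]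
    calc ∑ v ∈ univ.filter (fun v : Fin (N+1) => ilvl e v = ly), F v
        ≤ ∑ v ∈ univ.filter (fun v : Fin (N+1) => ilvl e v = ly),
            (Av Λ r e (indic x) v + Av Λ r e (indic y) v) := Finset.sum_le_sum hterm
      _ = 2 := by
          rw [Finset.sum_add_distrib,
            Av_mass' Λ r e hΛ hr0 hr hL x ly hky (by omega),
            Av_mass' Λ r e hΛ hr0 hr hL y ly hky (by omega)]
          norm_num
  have haux : ∀ n : ℕ, ∑ t ∈ Finset.Icc (ly - n) ly,
      (∑ v ∈ univ.filter (fun v : Fin (N+1) => ilvl e v = t), F v)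
      ≤ (∑ s ∈ Finset.range (n+1), (1 - 1/C) ^ s) *
        ∑ v ∈ univ.filter (fun v : Fin (N+1) => ilvl e v = ly), F v := by
    intro n
    induction n with
    | zero => simp
    | succ n ih =>
      have hins : Finset.Icc (ly - ((n:ℤ)+1)) ly = insert (ly - ((n:ℤ)+1)) (Finset.Icc (ly - n) ly) := by
        ext a
        simp only [Finset.mem_Icc, Finset.mem_insert]
        omega
      have hnot : (ly - ((n:ℤ)+1)) ∉ Finset.Icc (ly - (n:ℤ)) ly := by
        simp only [Finset.mem_Icc]
        omega
      have hstep := contract_iter Λ r e hΛ hr0 hr hC hL hhom x y z hzx hzy ly (by omega) (by omega) (n+1)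
      have hcast : ly - ((n+1:ℕ):ℤ) = ly - ((n:ℤ)+1) := by push_cast; ring
      rw [hcast] at hstep
      push_cast
      rw [hins, Finset.sum_insert hnot, Finset.sum_range_succ]
      calc (∑ v ∈ univ.filter (fun v : Fin (N+1) => ilvl e v = ly - ((n:ℤ)+1)), F v)
            + ∑ t ∈ Finset.Icc (ly - (n:ℤ)) ly,
              (∑ v ∈ univ.filter (fun v : Fin (N+1) => ilvl e v = t), F v)
          ≤ (1 - 1/C) ^ (n+1) * (∑ v ∈ univ.filter (fun v : Fin (N+1) => ilvl e v = ly), F v)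
            + (∑ s ∈ Finset.range (n+1), (1 - 1/C) ^ s) *
              ∑ v ∈ univ.filter (fun v : Fin (N+1) => ilvl e v = ly), F v := by
            apply add_le_add
            · exact hstep
            · exact ih
        _ = (∑ s ∈ Finset.range (n+1), (1 - 1/C) ^ s + (1 - 1/C) ^ (n+1)) *
              ∑ v ∈ univ.filter (fun v : Fin (N+1) => ilvl e v = ly), F v := by ring
  have hPartA : ∑ t ∈ Finset.Icc (-(k:ℤ)) ly,
      ∑ v ∈ univ.filter (fun v : Fin (N+1) => ilvl e v = t), F v ≤ 2 * C := by
    have hn : ly - ((ly + k).toNat : ℤ) = -(k:ℤ) := by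
      rw [Int.toNat_of_nonneg (by omega)]
      ring
    have := haux (ly + k).toNat
    rw [hn] at this
    have hgeom : (∑ s ∈ Finset.range ((ly + k).toNat + 1), (1 - 1/C) ^ s) ≤ C := by
      have := geom_aux hγ0 hγ1 ((ly + k).toNat + 1)
      have heq : 1 / (1 - (1 - 1/C)) = C := by
        field_simp
        ring
      rw [heq] at this
      exact this
    have hgeom0 : (0:ℝ) ≤ ∑ s ∈ Finset.range ((ly + k).toNat + 1), (1 - 1/C) ^ s :=
      Finset.sum_nonneg (fun s _ => pow_nonneg hγ0 s)
    have hS0 : (0:ℝ) ≤ ∑ v ∈ univ.filter (fun v : Fin (N+1) => ilvl e v = ly), F v :=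
      Finset.sum_nonneg (fun v _ => hF0 v)
    calc ∑ t ∈ Finset.Icc (-(k:ℤ)) ly,
        ∑ v ∈ univ.filter (fun v : Fin (N+1) => ilvl e v = t), F v
        ≤ (∑ s ∈ Finset.range ((ly + k).toNat + 1), (1 - 1/C) ^ s) *
            ∑ v ∈ univ.filter (fun v : Fin (N+1) => ilvl e v = ly), F v := this
      _ ≤ C * 2 := mul_le_mul hgeom hSly hS0 hCpos.le
      _ = 2 * C := by ring
  rw [hfib, hsplit, Finset.sum_union hdisj]
  linarith

end Aux7
end TCS

namespace TCS
section Aux8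
variable {M : Type*} [MetricSpace M] {L : ℤ → Set M} {k N : ℕ}
variable (Λ r : ℝ) (e : Fin (N+1) ≃ HypV M L k)

lemma heart (hΛ : 2 ≤ Λ) (hr0 : 0 < r) (hr : r < 1/6) {C : ℝ} (hC : 1 < C)
    (hL : ∀ i : ℤ, IsNet (r ^ i) (L i)) (hhom : IsHomog M Λ r C)
    (x y : Fin (N+1)) (hadj : (hypGraph Λ r M L k).Adj (e x) (e y)) :
    ∑ v, |Av Λ r e (indic x) v - Av Λ r e (indic y) v| ≤ 1 + 2*C := by
  have hΛpos : (0:ℝ) < Λ := by linarith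
  rw [hypGraph, SimpleGraph.fromRel_adj] at hadj
  obtain ⟨-, hrel⟩ := hadj
  have hsymm : ∑ v, |Av Λ r e (indic x) v - Av Λ r e (indic y) v|
      = ∑ v, |Av Λ r e (indic y) v - Av Λ r e (indic x) v| :=
    Finset.sum_congr rfl (fun v _ => abs_sub_comm _ _)
  rcases hrel with (⟨hlev, z, hz1, hz2⟩ | ⟨hlev, hball⟩) | (⟨hlev, z, hz1, hz2⟩ | ⟨hlev, hball⟩)
  · -- horizontal, order x y
    have hlev' : ilvl e x = ilvl e y := hlev
    exact heart0 Λ r e hΛ hr0 hr hC hL hhom x y z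
      (Metric.mem_closedBall.2 hz1)
      (Metric.mem_closedBall.2 (by rw [← hlev']; exact hz2))
      (le_of_eq hlev'.symm) (by omega)
  · -- radial, y deeper
    have hlev' : ilvl e y = ilvl e x + 1 := hlev
    rw [hsymm]
    exact heart0 Λ r e hΛ hr0 hr hC hL hhom y x (ipt e y)
      (Metric.mem_closedBall_self (by positivity))
      (hball (Metric.mem_closedBall_self (by positivity)))
      (by omega) (by omega)
  · -- horizontal, order y x
    have hlev' : ilvl e y = ilvl e x := hlev
    exact heart0 Λ r e hΛ hr0 hr hC hL hhom x y z
      (Metric.mem_closedBall.2 (by rw [← hlev']; exact hz2))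
      (Metric.mem_closedBall.2 hz1)
      (le_of_eq hlev') (by omega)
  · -- radial, x deeper
    have hlev' : ilvl e x = ilvl e y + 1 := hlev
    exact heart0 Λ r e hΛ hr0 hr hC hL hhom x y (ipt e x)
      (Metric.mem_closedBall_self (by positivity))
      (hball (Metric.mem_closedBall_self (by positivity)))
      (by omega) (by omega)

end Aux8
end TCS

namespace TCS
section Aux9
variable {M : Type*} [MetricSpace M] {L : ℤ → Set M} {k N : ℕ}
variable (Λ r : ℝ) (e : Fin (N+1) ≃ HypV M L k)

lemma diam_lt (hr0 : 0 < r) (hr : r < 1/6)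
    (hk : Real.logb (1/r) (Metric.diam (Set.univ : Set M)) < k) :
    Metric.diam (Set.univ : Set M) < r ^ (-(k:ℤ)) := by
  have hb : (1:ℝ) < 1/r := by
    rw [lt_div_iff₀ hr0]; linarith
  have hpow : ((1/r) : ℝ) ^ ((k:ℕ) : ℝ) = r ^ (-(k:ℤ)) := by
    rw [Real.rpow_natCast, one_div, inv_pow, ← zpow_natCast, ← zpow_neg]
  rcases lt_or_ge 0 (Metric.diam (Set.univ : Set M)) with hd | hd
  · have := (Real.logb_lt_iff_lt_rpow hb hd).1 hk
    rw [hpow] at this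
    exact this
  · have : (0:ℝ) < r ^ (-(k:ℤ)) := zpow_pos hr0 _
    linarith
  
lemma exists_root [CompactSpace M] (hr0 : 0 < r) (hr : r < 1/6)
    (hL : ∀ i : ℤ, IsNet (r ^ i) (L i))
    (hk : Real.logb (1/r) (Metric.diam (Set.univ : Set M)) < k) :
    ∃ i₀ : Fin (N+1), ilvl e i₀ = -(k:ℤ) ∧ ∀ n, ilvl e n = -(k:ℤ) → n = i₀ := by
  have hdiam := diam_lt (M := M) r hr0 hr hk
  obtain ⟨u, hu, -⟩ := (hL (-(k:ℤ))).2 (ipt e 0)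
  obtain ⟨i₀, hi₀, -⟩ := index_surj e (-(k:ℤ)) u (le_refl _) (by omega) hu
  refine ⟨i₀, hi₀, fun n hn => ?_⟩
  by_contra hne
  have hpt : ipt e n ≠ ipt e i₀ := fun hc => hne (index_inj e (by omega) hc)
  have hsep := (hL (-(k:ℤ))).1 (ipt e n) (by rw [← hn]; exact ipt_mem e n)
    (ipt e i₀) (by rw [← hi₀]; exact ipt_mem e i₀) hpt
  have hle : dist (ipt e n) (ipt e i₀) ≤ Metric.diam (Set.univ : Set M) :=
    Metric.dist_le_diam_of_mem (isCompact_univ.isBounded) trivial trivial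
  linarith

lemma adj_parent {n p : Fin (N+1)} (hp : p ∈ ParF Λ r e n) :
    (hypGraph Λ r M L k).Adj (e n) (e p) := by
  have hlev := parF_level Λ r e hp
  have hball := parF_ball Λ r e hp
  rw [hypGraph, SimpleGraph.fromRel_adj]
  constructor
  · intro hc
    have : ilvl e n = ilvl e p := congrArg (fun w : HypV M L k => w.1.1) hc
    omega
  · right
    right
    exact ⟨by show ilvl e n = ilvl e p + 1; omega, hball⟩

lemma reach_root (hΛ : 2 ≤ Λ) (hr0 : 0 < r) (hr : r < 1/6)
    (hL : ∀ i : ℤ, IsNet (r ^ i) (L i))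
    (i₀ : Fin (N+1)) (hroot : ilvl e i₀ = -(k:ℤ))
    (huniq : ∀ n, ilvl e n = -(k:ℤ) → n = i₀) :
    ∀ n, (hypGraph Λ r M L k).Reachable (e n) (e i₀) := by
  suffices H : ∀ (s : ℕ) (n : Fin (N+1)), ilvl e n = -(k:ℤ) + s →
      (hypGraph Λ r M L k).Reachable (e n) (e i₀) by
    intro n
    have h1 := (ilvl_mem e n).1
    have : ((ilvl e n + k).toNat : ℤ) = ilvl e n + k := Int.toNat_of_nonneg (by omega)
    exact H (ilvl e n + k).toNat n (by omega)
  intro s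
  induction s with
  | zero =>
    intro n hn
    rw [huniq n (by omega)]
  | succ s ih =>
    intro n hn
    have hne : (ParF Λ r e n).Nonempty :=
      parF_nonempty Λ r e hΛ hr0 hr hL (by push_cast at hn; omega)
    obtain ⟨p, hp⟩ := hne
    have hlev := parF_level Λ r e hp
    have hreach : (hypGraph Λ r M L k).Reachable (e p) (e i₀) :=
      ih p (by push_cast at hn ⊢; omega)
    exact ((adj_parent Λ r e hp).reachable).trans hreach

lemma hyp_connected (hΛ : 2 ≤ Λ) (hr0 : 0 < r) (hr : r < 1/6)
    (hL : ∀ i : ℤ, IsNet (r ^ i) (L i))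
    (i₀ : Fin (N+1)) (hroot : ilvl e i₀ = -(k:ℤ))
    (huniq : ∀ n, ilvl e n = -(k:ℤ) → n = i₀) :
    (hypGraph Λ r M L k).Connected := by
  have hreach := reach_root Λ r e hΛ hr0 hr hL i₀ hroot huniq
  haveI : Nonempty (HypV M L k) := ⟨e 0⟩
  constructor
  intro a b
  have ha := hreach (e.symm a)
  have hb := hreach (e.symm b)
  rw [e.apply_symm_apply] at ha hb
  exact ha.trans hb.symm

lemma adj_dist_le_one {a b : HypV M L k} (h : (hypGraph Λ r M L k).Adj a b) :
    (((hypGraph Λ r M L k).dist a b : ℕ) : ℝ) ≤ 1 := by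
  have := SimpleGraph.dist_le (SimpleGraph.Walk.cons h SimpleGraph.Walk.nil)
  simp only [SimpleGraph.Walk.length_cons, SimpleGraph.Walk.length_nil] at this
  exact_mod_cast this

lemma walk_telescope (g : Fin (N+1) → ℝ) (c : ℝ)
    (hadj : ∀ i j, (hypGraph Λ r M L k).Adj (e i) (e j) → |g i - g j| ≤ c) :
    ∀ {a b : HypV M L k} (p : (hypGraph Λ r M L k).Walk a b),
      |g (e.symm a) - g (e.symm b)| ≤ c * p.length := by
  intro a b p
  induction p with
  | nil => simp
  | @cons a v b h q ih =>
    have hadj' : (hypGraph Λ r M L k).Adj (e (e.symm a)) (e (e.symm v)) := by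
      rw [e.apply_symm_apply, e.apply_symm_apply]; exact h
    have h1 := hadj _ _ hadj'
    calc |g (e.symm a) - g (e.symm b)|
        ≤ |g (e.symm a) - g (e.symm v)| + |g (e.symm v) - g (e.symm b)| := abs_sub_le _ _ _
      _ ≤ c + c * q.length := add_le_add h1 ih
      _ = c * (SimpleGraph.Walk.cons h q).length := by
          rw [SimpleGraph.Walk.length_cons]
          push_cast
          ring

lemma lip_of_adj (hconn : (hypGraph Λ r M L k).Connected) (g : Fin (N+1) → ℝ) (c : ℝ)
    (hadj : ∀ i j, (hypGraph Λ r M L k).Adj (e i) (e j) → |g i - g j| ≤ c) (i j : Fin (N+1)) :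
    |g i - g j| ≤ c * (((hypGraph Λ r M L k).dist (e i) (e j) : ℕ) : ℝ) := by
  obtain ⟨p, hp⟩ := (hconn (e i) (e j)).exists_walk_length_eq_dist
  have := walk_telescope Λ r e g c hadj p
  rw [e.symm_apply_apply, e.symm_apply_apply, hp] at this
  exact this

end Aux9
end TCS

namespace TCS

section Aux10
variable {V : Type*} [Fintype V]

lemma tcNorm_bddAbove (d : V → V → ℝ) (x0 : V) (μ : V → ℝ) :
    BddAbove {c : ℝ | ∃ f : V → ℝ, f x0 = 0 ∧ (∀ x y, |f x - f y| ≤ d x y) ∧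
      c = ∑ x, μ x * f x} := by
  refine ⟨∑ x, |μ x| * d x x0, ?_⟩
  rintro c ⟨f, hf0, hlip, rfl⟩
  apply Finset.sum_le_sum
  intro x _
  have h1 : |f x| ≤ d x x0 := by
    have := hlip x x0
    rw [hf0, sub_zero] at this
    exact this
  calc μ x * f x ≤ |μ x * f x| := le_abs_self _
    _ = |μ x| * |f x| := abs_mul _ _
    _ ≤ |μ x| * d x x0 := mul_le_mul_of_nonneg_left h1 (abs_nonneg _)

lemma tcNorm_nonneg (d : V → V → ℝ) (x0 : V) (μ : V → ℝ) (hd : ∀ x y, 0 ≤ d x y) :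
    0 ≤ tcNorm d x0 μ := by
  have h0 : (0:ℝ) ∈ {c : ℝ | ∃ f : V → ℝ, f x0 = 0 ∧ (∀ x y, |f x - f y| ≤ d x y) ∧
      c = ∑ x, μ x * f x} :=
    ⟨fun _ => 0, rfl, fun x y => by simpa using hd x y, by simp⟩
  exact le_csSup (tcNorm_bddAbove d x0 μ) h0

lemma tcNorm_le (d : V → V → ℝ) (x0 : V) (μ : V → ℝ) {a : ℝ} (ha : 0 ≤ a)
    (h : ∀ f : V → ℝ, f x0 = 0 → (∀ x y, |f x - f y| ≤ d x y) → ∑ x, μ x * f x ≤ a) :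
    tcNorm d x0 μ ≤ a := by
  apply Real.sSup_le _ ha
  rintro c ⟨f, hf0, hlip, rfl⟩
  exact h f hf0 hlip

lemma pairing_le_tcNorm (d : V → V → ℝ) (x0 : V) (μ : V → ℝ) (f : V → ℝ)
    (hf0 : f x0 = 0) (hlip : ∀ x y, |f x - f y| ≤ d x y) :
    ∑ x, μ x * f x ≤ tcNorm d x0 μ :=
  le_csSup (tcNorm_bddAbove d x0 μ) ⟨f, hf0, hlip, rfl⟩

end Aux10
end TCS

namespace TCS
section Aux11
variable {M : Type*} [MetricSpace M] {L : ℤ → Set M} {k N : ℕ}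
variable (Λ r : ℝ) (e : Fin (N+1) ≃ HypV M L k)

lemma sum_indic_mul {V : Type*} [Fintype V] [DecidableEq V] (x : V) (g : V → ℝ) :
    ∑ z, indic x z * g z = g x := by
  rw [Finset.sum_congr rfl (fun z _ => by
    show (if z = x then (1:ℝ) else 0) * g z = if z = x then g z else 0
    split <;> ring)]
  simp

/-- The generating set of molecules of adjacent pairs, together with `0`. -/
def molGen : Finset (Fin (N+1) → ℝ) :=
  insert 0 ((univ.filter (fun p : (Fin (N+1)) × (Fin (N+1)) =>
    (hypGraph Λ r M L k).Adj (e p.1) (e p.2))).image (fun p => mol p.1 p.2))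

lemma duality (hconn : (hypGraph Λ r M L k).Connected) (μ : Fin (N+1) → ℝ)
    (hnorm : tcNorm (fun i j => (((hypGraph Λ r M L k).dist (e i) (e j) : ℕ) : ℝ)) 0 μ ≤ 1)
    (hsum : ∑ x, μ x = 0) :
    μ ∈ convexHull ℝ ((molGen Λ r e : Finset (Fin (N+1) → ℝ)) : Set (Fin (N+1) → ℝ)) := by
  classical
  set dG : Fin (N+1) → Fin (N+1) → ℝ :=
    fun i j => (((hypGraph Λ r M L k).dist (e i) (e j) : ℕ) : ℝ) with hdG
  by_contra hμ
  have hconv : Convex ℝ (convexHull ℝ ((molGen Λ r e : Finset (Fin (N+1) → ℝ)) :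
      Set (Fin (N+1) → ℝ))) := convex_convexHull ℝ _
  have hclosed : IsClosed (convexHull ℝ ((molGen Λ r e : Finset (Fin (N+1) → ℝ)) :
      Set (Fin (N+1) → ℝ))) :=
    ((molGen Λ r e).finite_toSet.isCompact_convexHull (𝕜 := ℝ)).isClosed
  obtain ⟨f, u, hfa, hfμ⟩ := geometric_hahn_banach_closed_point hconv hclosed hμ
  set g : Fin (N+1) → ℝ := fun i => f (indic i) with hg
  have hrep : ∀ ν : Fin (N+1) → ℝ, f ν = ∑ i, ν i * g i := by
    intro ν
    have hν : ν = ∑ i, ν i • indic i := by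
      funext z
      simp only [Finset.sum_apply, Pi.smul_apply, smul_eq_mul, indic]
      rw [Finset.sum_congr rfl (fun i _ => by
        show ν i * (if z = i then (1:ℝ) else 0) = if z = i then ν i else 0
        split <;> ring)]
      simp
    conv_lhs => rw [hν]
    rw [map_sum]
    exact Finset.sum_congr rfl (fun i _ => by rw [map_smul]; simp [hg])
  have hu0 : 0 < u := by
    have h0m : (0 : Fin (N+1) → ℝ) ∈ convexHull ℝ ((molGen Λ r e : Finset (Fin (N+1) → ℝ)) :
        Set (Fin (N+1) → ℝ)) :=
      subset_convexHull ℝ _ (by simp [molGen])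
    have := hfa 0 h0m
    rw [map_zero] at this
    exact this
  have hmolf : ∀ i j, f (mol i j) = g i - g j := by
    intro i j
    rw [hrep]
    rw [Finset.sum_congr rfl (fun z _ => by
      show mol i j z * g z = indic i z * g z - indic j z * g z
      simp only [mol]; ring)]
    rw [Finset.sum_sub_distrib, sum_indic_mul, sum_indic_mul]
  have hadjbound : ∀ i j, (hypGraph Λ r M L k).Adj (e i) (e j) → |g i - g j| ≤ u := by
    intro i j hadj
    have hmem : mol i j ∈ molGen Λ r e := by
      rw [molGen]
      apply Finset.mem_insert_of_mem
      exact Finset.mem_image.2 ⟨(i, j), Finset.mem_filter.2 ⟨Finset.mem_univ _, hadj⟩, rfl⟩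
    have hmem' : mol j i ∈ molGen Λ r e := by
      rw [molGen]
      apply Finset.mem_insert_of_mem
      exact Finset.mem_image.2 ⟨(j, i), Finset.mem_filter.2 ⟨Finset.mem_univ _, hadj.symm⟩, rfl⟩
    have h1 := hfa (mol i j) (subset_convexHull ℝ _ hmem)
    have h2 := hfa (mol j i) (subset_convexHull ℝ _ hmem')
    rw [hmolf] at h1 h2
    rw [abs_le]
    constructor <;> linarith
  have hlip := lip_of_adj Λ r e hconn g u hadjbound
  set ψ : Fin (N+1) → ℝ := fun i => (g i - g 0) / u with hψ
  have hψ0 : ψ 0 = 0 := by rw [hψ]; simp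
  have hψlip : ∀ i j, |ψ i - ψ j| ≤ dG i j := by
    intro i j
    rw [hψ]
    simp only
    rw [div_sub_div_same]
    have : g i - g 0 - (g j - g 0) = g i - g j := by ring
    rw [this, abs_div, abs_of_pos hu0, div_le_iff₀ hu0]
    calc |g i - g j| ≤ u * dG i j := hlip i j
      _ = dG i j * u := by ring
  have hpair := pairing_le_tcNorm dG 0 μ ψ hψ0 hψlip
  have hsum2 : ∑ x, μ x * ψ x = f μ / u := by
    have e1 : ∀ x, μ x * ψ x = μ x * g x / u - μ x * (g 0 / u) := by
      intro x
      rw [hψ]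
      simp only
      field_simp
    rw [Finset.sum_congr rfl (fun x _ => e1 x), Finset.sum_sub_distrib, ← Finset.sum_mul,
      hsum, zero_mul, sub_zero, ← Finset.sum_div, hrep μ]
  have hgt : 1 < f μ / u := by
    rw [lt_div_iff₀ hu0, one_mul]
    exact hfμ
  rw [hsum2] at hpair
  have := le_trans hpair hnorm
  linarith

end Aux11
end TCS

namespace TCS
section Aux12
variable {M : Type*} [MetricSpace M] {L : ℤ → Set M} {k N : ℕ}
variable (Λ r : ℝ) (e : Fin (N+1) ≃ HypV M L k)

lemma Av_mol (i j : Fin (N+1)) (v : Fin (N+1)) :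
    Av Λ r e (mol i j) v = Av Λ r e (indic i) v - Av Λ r e (indic j) v := by
  have hmol : mol i j = indic i + (-1 : ℝ) • indic j := by
    funext z
    simp only [mol, Pi.add_apply, Pi.smul_apply, smul_eq_mul]
    ring
  rw [hmol, Av_add, Av_smul]
  ring

lemma Av_finsum {α : Type*} (s : Finset α) (c : α → ℝ) (F : α → (Fin (N+1) → ℝ))
    (v : Fin (N+1)) :
    Av Λ r e (∑ a ∈ s, c a • F a) v = ∑ a ∈ s, c a * Av Λ r e (F a) v := by
  classical
  induction s using Finset.induction_on with
  | empty => simp [Av_zero]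
  | @insert a s ha ih =>
    rw [Finset.sum_insert ha, Finset.sum_insert ha, Av_add, Av_smul, ih]

lemma main_estimate (hΛ : 2 ≤ Λ) (hr0 : 0 < r) (hr : r < 1/6) {C : ℝ} (hC : 1 < C)
    (hL : ∀ i : ℤ, IsNet (r ^ i) (L i)) (hhom : IsHomog M Λ r C)
    (hconn : (hypGraph Λ r M L k).Connected) (μ : Fin (N+1) → ℝ)
    (hsum : ∑ x, μ x = 0)
    (hnorm : tcNorm (fun i j => (((hypGraph Λ r M L k).dist (e i) (e j) : ℕ) : ℝ)) 0 μ ≤ 1) :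
    ∑ v, |Av Λ r e μ v| ≤ 1 + 2*C := by
  classical
  have hCpos : (0:ℝ) < C := by linarith
  have hmem := duality Λ r e hconn μ hnorm hsum
  rw [Finset.mem_convexHull] at hmem
  obtain ⟨w, hw0, hw1, hcm⟩ := hmem
  rw [Finset.centerMass_eq_of_sum_1 _ id hw1] at hcm
  have hμrep : μ = ∑ a ∈ molGen Λ r e, w a • a := by
    rw [← hcm]; rfl
  have hbound : ∀ a ∈ molGen Λ r e, ∑ v, |Av Λ r e a v| ≤ 1 + 2*C := by
    intro a ha
    rw [molGen, Finset.mem_insert] at ha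
    rcases ha with rfl | ha
    · simp [Av_zero]
      linarith
    · obtain ⟨p, hp, rfl⟩ := Finset.mem_image.1 ha
      rw [Finset.mem_filter] at hp
      have hadj := hp.2
      have : ∀ v, |Av Λ r e (mol p.1 p.2) v|
          = |Av Λ r e (indic p.1) v - Av Λ r e (indic p.2) v| := by
        intro v; rw [Av_mol]
      rw [Finset.sum_congr rfl (fun v _ => this v)]
      exact heart Λ r e hΛ hr0 hr hC hL hhom p.1 p.2 hadj
  calc ∑ v, |Av Λ r e μ v|
      = ∑ v, |∑ a ∈ molGen Λ r e, w a * Av Λ r e a v| := by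
        apply Finset.sum_congr rfl
        intro v _
        rw [hμrep, Av_finsum]
    _ ≤ ∑ v, ∑ a ∈ molGen Λ r e, w a * |Av Λ r e a v| := by
        apply Finset.sum_le_sum
        intro v _
        calc |∑ a ∈ molGen Λ r e, w a * Av Λ r e a v|
            ≤ ∑ a ∈ molGen Λ r e, |w a * Av Λ r e a v| := Finset.abs_sum_le_sum_abs _ _
          _ = ∑ a ∈ molGen Λ r e, w a * |Av Λ r e a v| := by
              apply Finset.sum_congr rfl
              intro a ha
              rw [abs_mul, abs_of_nonneg (hw0 a ha)]
    _ = ∑ a ∈ molGen Λ r e, w a * ∑ v, |Av Λ r e a v| := by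
        rw [Finset.sum_comm]
        exact Finset.sum_congr rfl (fun a _ => by rw [Finset.mul_sum])
    _ ≤ ∑ a ∈ molGen Λ r e, w a * (1 + 2*C) := by
        apply Finset.sum_le_sum
        intro a ha
        exact mul_le_mul_of_nonneg_left (hbound a ha) (hw0 a ha)
    _ = 1 + 2*C := by
        rw [← Finset.sum_mul, hw1, one_mul]

end Aux12
end TCS

namespace TCS
section Aux13
variable {M : Type*} [MetricSpace M] {L : ℤ → Set M} {k N : ℕ}
variable (Λ r : ℝ) (e : Fin (N+1) ≃ HypV M L k)

lemma sum_mul_indic (h : Fin (N+1) → ℝ) (z : Fin (N+1)) :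
    ∑ j, h j * indic j z = h z := by
  rw [Finset.sum_congr rfl (fun j _ => by
    show h j * (if z = j then (1:ℝ) else 0) = if z = j then h j else 0
    split <;> ring)]
  simp

lemma Bv_sum_zero {n : Fin (N+1)} (h : (ParF Λ r e n).Nonempty) :
    ∑ z, Bv Λ r e n z = 0 := by
  unfold Bv
  rw [Finset.sum_sub_distrib, sum_lamF Λ r e h]
  have : ∑ z, indic n z = 1 := by
    rw [Finset.sum_eq_single_of_mem n (Finset.mem_univ n) (fun b _ hb => by simp [indic, hb])]
    simp [indic]
  rw [this]
  ring

lemma sum_Av_lamF (μ : Fin (N+1) → ℝ) (z : Fin (N+1)) :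
    ∑ j, Av Λ r e μ j * lamF Λ r e j z = Av Λ r e μ z - μ z := by
  have h1 : ∑ j ∈ univ.filter (fun m : Fin (N+1) => ilvl e m = ilvl e z + 1),
      Av Λ r e μ j * lamF Λ r e j z = Av Λ r e μ z - μ z := by
    rw [Av_eq Λ r e μ z]
    ring
  rw [← h1]
  symm
  apply Finset.sum_filter_of_ne
  intro j _ hj
  have hlam : lamF Λ r e j z ≠ 0 := fun hc => hj (by rw [hc]; ring)
  have := parF_level Λ r e (lamF_ne_imp Λ r e hlam)
  omega

lemma Av_bot (hΛ : 2 ≤ Λ) (hr0 : 0 < r) (hr : r < 1/6)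
    (hL : ∀ i : ℤ, IsNet (r ^ i) (L i))
    (i₀ : Fin (N+1)) (hroot : ilvl e i₀ = -(k:ℤ))
    (huniq : ∀ n, ilvl e n = -(k:ℤ) → n = i₀)
    (μ : Fin (N+1) → ℝ) (hsum : ∑ x, μ x = 0) : Av Λ r e μ i₀ = 0 := by
  have hlam_sum : ∀ m : Fin (N+1), ∑ j, lamF Λ r e m j = if m = i₀ then 0 else 1 := by
    intro m
    by_cases hm : m = i₀
    · subst hm
      rw [if_pos rfl]
      apply Finset.sum_eq_zero
      intro j _
      rw [lamF, parF_bot Λ r e hroot]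
      simp
    · rw [if_neg hm]
      apply sum_lamF
      apply parF_nonempty Λ r e hΛ hr0 hr hL
      have h1 := (ilvl_mem e m).1
      rcases lt_or_eq_of_le h1 with h | h
      · exact h
      · exact absurd (huniq m h.symm) hm
  have h1 : ∀ j, μ j = Av Λ r e μ j - ∑ m, Av Λ r e μ m * lamF Λ r e m j := by
    intro j
    rw [sum_Av_lamF]
    ring
  have h2 : ∑ j, ∑ m, Av Λ r e μ m * lamF Λ r e m j
      = ∑ m, Av Λ r e μ m * (∑ j, lamF Λ r e m j) := by
    rw [Finset.sum_comm]
    exact Finset.sum_congr rfl (fun m _ => by rw [Finset.mul_sum])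
  have h3 : ∑ m, Av Λ r e μ m * (∑ j, lamF Λ r e m j)
      = (∑ m, Av Λ r e μ m) - Av Λ r e μ i₀ := by
    calc ∑ m, Av Λ r e μ m * (∑ j, lamF Λ r e m j)
        = ∑ m, (Av Λ r e μ m - (if m = i₀ then Av Λ r e μ m else 0)) :=
          Finset.sum_congr rfl (fun m _ => by rw [hlam_sum m]; split <;> ring)
      _ = (∑ m, Av Λ r e μ m) - Av Λ r e μ i₀ := by
          rw [Finset.sum_sub_distrib]
          congr 1
          simp
  have h4 : ∑ j, μ j = Av Λ r e μ i₀ := by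
    rw [Finset.sum_congr rfl (fun j _ => h1 j), Finset.sum_sub_distrib, h2, h3]
    ring
  rw [← h4, hsum]

lemma reconstruction (hΛ : 2 ≤ Λ) (hr0 : 0 < r) (hr : r < 1/6)
    (hL : ∀ i : ℤ, IsNet (r ^ i) (L i))
    (i₀ : Fin (N+1)) (hroot : ilvl e i₀ = -(k:ℤ))
    (huniq : ∀ n, ilvl e n = -(k:ℤ) → n = i₀)
    (μ : Fin (N+1) → ℝ) (hsum : ∑ x, μ x = 0) (z : Fin (N+1)) :
    μ z = ∑ j ∈ univ.filter (· ≠ i₀), Av Λ r e μ j * Bv Λ r e j z := by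
  have hfull : ∑ j, Av Λ r e μ j * Bv Λ r e j z = μ z := by
    unfold Bv
    rw [Finset.sum_congr rfl (fun j _ => by
      show Av Λ r e μ j * (indic j z - lamF Λ r e j z)
        = Av Λ r e μ j * indic j z - Av Λ r e μ j * lamF Λ r e j z
      ring)]
    rw [Finset.sum_sub_distrib, sum_mul_indic, sum_Av_lamF]
    ring
  have hzero := Av_bot Λ r e hΛ hr0 hr hL i₀ hroot huniq μ hsum
  rw [Finset.filter_ne', Finset.sum_erase_eq_sub (Finset.mem_univ i₀), hfull, hzero]
  ring

lemma indep (i₀ : Fin (N+1)) (hroot : ilvl e i₀ = -(k:ℤ))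
    (c : Fin (N+1) → ℝ)
    (hce : ∀ z, ∑ j ∈ univ.filter (· ≠ i₀), c j * Bv Λ r e j z = 0) :
    ∀ j, j ≠ i₀ → c j = 0 := by
  by_contra hcon
  push_neg at hcon
  obtain ⟨j₁, hj₁, hcj₁⟩ := hcon
  have hS : (univ.filter (fun j : Fin (N+1) => j ≠ i₀ ∧ c j ≠ 0)).Nonempty :=
    ⟨j₁, Finset.mem_filter.2 ⟨Finset.mem_univ _, hj₁, hcj₁⟩⟩
  obtain ⟨jm, hjm, hmax⟩ := Finset.exists_max_image _ (ilvl e) hS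
  rw [Finset.mem_filter] at hjm
  obtain ⟨-, hjmne, hcjm⟩ := hjm
  have heval := hce jm
  have hothers : ∀ b ∈ univ.filter (· ≠ i₀), b ≠ jm → c b * Bv Λ r e b jm = 0 := by
    intro b hb hbne
    rw [Finset.mem_filter] at hb
    unfold Bv
    have hjb : ¬ jm = b := fun hc => hbne hc.symm
    have hind : indic b jm = 0 := by simp [indic, hjb]
    rw [hind]
    by_cases hcb : c b = 0
    · rw [hcb]; ring
    · have hlam : lamF Λ r e b jm = 0 := by
        by_contra hl
        have hlev := parF_level Λ r e (lamF_ne_imp Λ r e hl)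
        have : ilvl e b ≤ ilvl e jm :=
          hmax b (Finset.mem_filter.2 ⟨Finset.mem_univ _, hb.2, hcb⟩)
        omega
      rw [hlam]
      ring
  rw [Finset.sum_eq_single_of_mem jm (Finset.mem_filter.2 ⟨Finset.mem_univ _, hjmne⟩)
    hothers] at heval
  have hBv : Bv Λ r e jm jm = 1 := by
    unfold Bv
    have hlam : lamF Λ r e jm jm = 0 := by
      rw [lamF]
      split
      · next hmem =>
          have := parF_level Λ r e hmem
          omega
      · rfl
    simp [indic, hlam]
  rw [hBv, mul_one] at heval
  exact hcjm heval

lemma biorth (hΛ : 2 ≤ Λ) (hr0 : 0 < r) (hr : r < 1/6)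
    (hL : ∀ i : ℤ, IsNet (r ^ i) (L i))
    (i₀ : Fin (N+1)) (hroot : ilvl e i₀ = -(k:ℤ))
    (huniq : ∀ n, ilvl e n = -(k:ℤ) → n = i₀)
    (j j' : Fin (N+1)) (hj : j ≠ i₀) (hj' : j' ≠ i₀) :
    Av Λ r e (Bv Λ r e j') j = if j = j' then 1 else 0 := by
  have hne' : (ParF Λ r e j').Nonempty := by
    apply parF_nonempty Λ r e hΛ hr0 hr hL
    have h1 := (ilvl_mem e j').1
    rcases lt_or_eq_of_le h1 with h | h
    · exact h
    · exact absurd (huniq j' h.symm) hj'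
  have hsum' : ∑ z, Bv Λ r e j' z = 0 := Bv_sum_zero Λ r e hne'
  set c : Fin (N+1) → ℝ := fun m => Av Λ r e (Bv Λ r e j') m - (if m = j' then 1 else 0)
    with hc
  have hce : ∀ z, ∑ m ∈ univ.filter (· ≠ i₀), c m * Bv Λ r e m z = 0 := by
    intro z
    have hrec := reconstruction Λ r e hΛ hr0 hr hL i₀ hroot huniq (Bv Λ r e j') hsum' z
    have hdelta : ∑ m ∈ univ.filter (· ≠ i₀), (if m = j' then (1:ℝ) else 0) * Bv Λ r e m z
        = Bv Λ r e j' z := by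
      rw [Finset.sum_eq_single_of_mem j'
        (Finset.mem_filter.2 ⟨Finset.mem_univ _, hj'⟩)
        (fun b _ hb => by rw [if_neg hb]; ring)]
      rw [if_pos rfl, one_mul]
    rw [Finset.sum_congr rfl (fun m _ => by
      show c m * Bv Λ r e m z = Av Λ r e (Bv Λ r e j') m * Bv Λ r e m z
        - (if m = j' then (1:ℝ) else 0) * Bv Λ r e m z
      rw [hc]; ring)]
    rw [Finset.sum_sub_distrib, hdelta, ← hrec]
    ring
  have := indep Λ r e i₀ hroot c hce j hj
  rw [hc] at this
  simp only at this
  linarith [this]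

end Aux13
end TCS

namespace TCS
section Aux14
variable {M : Type*} [MetricSpace M] {L : ℤ → Set M} {k N : ℕ}
variable (Λ r : ℝ) (e : Fin (N+1) ≃ HypV M L k)

lemma tcNorm_Bv_le_one {n : Fin (N+1)} (hne : (ParF Λ r e n).Nonempty) :
    tcNorm (fun i j => (((hypGraph Λ r M L k).dist (e i) (e j) : ℕ) : ℝ)) 0
      (Bv Λ r e n) ≤ 1 := by
  apply tcNorm_le _ _ _ zero_le_one
  intro f hf0 hlip
  have hcard : (0:ℝ) < ((ParF Λ r e n).card : ℝ) := by
    exact_mod_cast Finset.card_pos.2 hne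
  have h1 : ∑ z, Bv Λ r e n z * f z
      = ∑ z ∈ ParF Λ r e n, (1 / ((ParF Λ r e n).card : ℝ)) * (f n - f z) := by
    unfold Bv
    rw [Finset.sum_congr rfl (fun z _ => by
      show (indic n z - lamF Λ r e n z) * f z = indic n z * f z - lamF Λ r e n z * f z
      ring)]
    rw [Finset.sum_sub_distrib]
    have h2 : ∑ z, indic n z * f z = f n := sum_indic_mul n f
    have h3 : ∑ z, lamF Λ r e n z * f z
        = ∑ z ∈ ParF Λ r e n, (1 / ((ParF Λ r e n).card : ℝ)) * f z := by
      rw [← Finset.sum_subset (Finset.subset_univ (ParF Λ r e n)) (fun x _ hx => by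
        rw [lamF, if_neg hx]; ring)]
      exact Finset.sum_congr rfl (fun z hz => by rw [lamF, if_pos hz])
    rw [h2, h3]
    have h4 : ∑ z ∈ ParF Λ r e n, (1 / ((ParF Λ r e n).card : ℝ)) * (f n - f z)
        = (∑ _z ∈ ParF Λ r e n, (1 / ((ParF Λ r e n).card : ℝ)) * f n)
          - ∑ z ∈ ParF Λ r e n, (1 / ((ParF Λ r e n).card : ℝ)) * f z := by
      rw [← Finset.sum_sub_distrib]
      exact Finset.sum_congr rfl (fun z _ => by ring)
    rw [h4, Finset.sum_const, nsmul_eq_mul]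
    field_simp
  rw [h1]
  calc ∑ z ∈ ParF Λ r e n, (1 / ((ParF Λ r e n).card : ℝ)) * (f n - f z)
      ≤ ∑ z ∈ ParF Λ r e n, (1 / ((ParF Λ r e n).card : ℝ)) * 1 := by
        apply Finset.sum_le_sum
        intro z hz
        apply mul_le_mul_of_nonneg_left _ (by positivity)
        have hd1 : (((hypGraph Λ r M L k).dist (e n) (e z) : ℕ) : ℝ) ≤ 1 :=
          adj_dist_le_one Λ r (adj_parent Λ r e hz)
        calc f n - f z ≤ |f n - f z| := le_abs_self _
          _ ≤ (((hypGraph Λ r M L k).dist (e n) (e z) : ℕ) : ℝ) := hlip n z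
          _ ≤ 1 := hd1
    _ = 1 := by
        rw [Finset.sum_const, nsmul_eq_mul]
        field_simp

end Aux14
end TCS

namespace TCS

theorem statement17 (lam r C : ℝ) (hlam : 2 ≤ lam) (hr0 : 0 < r) (hr : r < 1 / 6)
    (hC : 1 < C)
    (M : Type*) [MetricSpace M] [CompactSpace M] (hhom : IsHomog M lam r C)
    (L : ℤ → Set M) (hL : ∀ i : ℤ, IsNet (r ^ i) (L i))
    (k : ℕ) (hk : Real.logb (1 / r) (Metric.diam (Set.univ : Set M)) < k)
    (N : ℕ) (e : Fin (N+1) ≃ HypV M L k) :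
    d1Space (fun i j => ((hypGraph lam r M L k).dist (e i) (e j) : ℝ)) ≤ 1 + 2 * C := by
  classical
  set dG : Fin (N+1) → Fin (N+1) → ℝ :=
    fun i j => ((hypGraph lam r M L k).dist (e i) (e j) : ℝ) with hdG
  have hdG0 : ∀ i j, 0 ≤ dG i j := fun i j => Nat.cast_nonneg _
  obtain ⟨i₀, hroot, huniq⟩ := exists_root r e hr0 hr hL hk
  have hconn := hyp_connected lam r e hlam hr0 hr hL i₀ hroot huniq
  have hnonroot : ∀ j, j ≠ i₀ → (ParF lam r e j).Nonempty := by
    intro j hj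
    apply parF_nonempty lam r e hlam hr0 hr hL
    have h1 := (ilvl_mem e j).1
    rcases lt_or_eq_of_le h1 with h | h
    · exact h
    · exact absurd (huniq j h.symm) hj
  set σ : Equiv.Perm (Fin (N+1)) := Equiv.swap 0 i₀ with hσ
  have hσ0 : σ 0 = i₀ := Equiv.swap_apply_left 0 i₀
  have hσσ : ∀ n, σ (σ n) = n := fun n => Equiv.swap_apply_self 0 i₀ n
  have hσne : ∀ n : Fin (N+1), n ≠ 0 → σ n ≠ i₀ := by
    intro n hn hc
    apply hn
    have : σ n = σ 0 := by rw [hσ0]; exact hc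
    exact σ.injective this
  have hσne' : ∀ j : Fin (N+1), j ≠ i₀ → σ j ≠ 0 := by
    intro j hj hc
    apply hj
    have := congrArg σ hc
    rw [hσσ, hσ0] at this
    exact this
  set b : Fin (N+1) → Fin (N+1) → ℝ := fun n => Bv lam r e (σ n) with hb
  set bstar : Fin (N+1) → (Fin (N+1) → ℝ) → ℝ := fun n μ => Av lam r e μ (σ n) with hbstar
  -- reindexing lemma
  have hreindex : ∀ (F : Fin (N+1) → ℝ),
      ∑ n ∈ univ.filter (· ≠ (0 : Fin (N+1))), F (σ n)
        = ∑ j ∈ univ.filter (· ≠ i₀), F j := by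
    intro F
    apply Finset.sum_bij' (fun n _ => σ n) (fun j _ => σ j)
    · intro n hn
      rw [Finset.mem_filter] at hn ⊢
      exact ⟨Finset.mem_univ _, hσne n hn.2⟩
    · intro j hj
      rw [Finset.mem_filter] at hj ⊢
      exact ⟨Finset.mem_univ _, hσne' j hj.2⟩
    · intro n _; exact hσσ n
    · intro j _; exact hσσ j
    · intro n _; rfl
  have hFB : IsFreeBasis N b bstar := by
    refine ⟨?_, ?_, ?_, ?_⟩
    · intro n hn
      exact Bv_sum_zero lam r e (hnonroot (σ n) (hσne n hn))
    · intro μ hsum z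
      rw [reconstruction lam r e hlam hr0 hr hL i₀ hroot huniq μ hsum z]
      exact (hreindex (fun j => Av lam r e μ j * Bv lam r e j z)).symm
    · intro n m hn hm
      rw [hbstar, hb]
      simp only
      rw [biorth lam r e hlam hr0 hr hL i₀ hroot huniq (σ n) (σ m) (hσne n hn) (hσne m hm)]
      have : (σ n = σ m) ↔ (n = m) := ⟨fun h => σ.injective h, fun h => by rw [h]⟩
      by_cases hnm : n = m
      · rw [if_pos (this.2 hnm), if_pos hnm]
      · rw [if_neg (fun hc => hnm (this.1 hc)), if_neg hnm]
    · intro n c μ ν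
      rw [hbstar]
      simp only
      rw [Av_add, Av_smul]
  have hd1 : d1Basis dG b bstar ≤ 1 + 2 * C := by
    apply Real.sSup_le _ (by linarith)
    rintro c ⟨μ, hsum, hnorm, rfl⟩
    calc ∑ n ∈ univ.filter (· ≠ (0 : Fin (N+1))), |bstar n μ| * tcNorm dG 0 (b n)
        ≤ ∑ n ∈ univ.filter (· ≠ (0 : Fin (N+1))), |bstar n μ| := by
          apply Finset.sum_le_sum
          intro n hn
          rw [Finset.mem_filter] at hn
          have h1 : tcNorm dG 0 (b n) ≤ 1 :=
            tcNorm_Bv_le_one lam r e (hnonroot (σ n) (hσne n hn.2))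
          calc |bstar n μ| * tcNorm dG 0 (b n) ≤ |bstar n μ| * 1 :=
                mul_le_mul_of_nonneg_left h1 (abs_nonneg _)
            _ = |bstar n μ| := mul_one _
      _ ≤ ∑ n, |bstar n μ| := by
          apply Finset.sum_le_sum_of_subset_of_nonneg (Finset.filter_subset _ _)
          intro n _ _
          exact abs_nonneg _
      _ = ∑ j, |Av lam r e μ j| := Equiv.sum_comp σ (fun j => |Av lam r e μ j|)
      _ ≤ 1 + 2 * C :=
          main_estimate lam r e hlam hr0 hr hC hL hhom hconn μ hsum (le_of_eq hnorm)
  have hmem : d1Basis dG b bstar ∈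
      {c : ℝ | ∃ b' bstar', IsFreeBasis N b' bstar' ∧ c = d1Basis dG b' bstar'} :=
    ⟨b, bstar, hFB, rfl⟩
  have hbdd : BddBelow {c : ℝ | ∃ b' bstar', IsFreeBasis N b' bstar' ∧
      c = d1Basis dG b' bstar'} := by
    refine ⟨0, ?_⟩
    rintro c ⟨b', bstar', -, rfl⟩
    apply Real.sSup_nonneg
    rintro x ⟨μ, -, -, rfl⟩
    apply Finset.sum_nonneg
    intro n _
    exact mul_nonneg (abs_nonneg _) (tcNorm_nonneg dG 0 (b' n) hdG0)
  exact le_trans (csInf_le hbdd hmem) hd1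

end TCS
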